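/- arXiv:1011.1058 — 4 statements merged into one kernel-verified Lean document; each statement's English description precedes it below -/
import Mathlib

section
/- Let G be a simple undirected graph with girth g = 2r+1 and let v be any vertex. Then the number of vertices of G is at least n_0(v) + n_1(v) + ... + n_r(v), where n_i(v) is the number of non-returning walks of length i starting at v. -/
variable {V : Type*}

/-- `w : Fin (i+1) → V` is a non-returning walk of `i` edges in `G`:
consecutive vertices are adjacent and there is no immediate backtracking. -/
def IsNR (G : SimpleGraph V) (i : ℕ) (w : Fin (i + 1) → V) : Prop :=
  (∀ j : ℕ, ∀ _h : j < i, G.Adj (w ⟨j, by omega⟩) (w ⟨j + 1, by omega⟩)) ∧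
  (∀ j : ℕ, ∀ _h : j + 2 ≤ i, w ⟨j, by omega⟩ ≠ w ⟨j + 2, by omega⟩)

/-- `nV G i v` : the number of non-returning walks of `i` edges starting at `v`. -/
noncomputable def nV (G : SimpleGraph V) (i : ℕ) (v : V) : ℕ :=
  Nat.card {w : Fin (i + 1) → V // IsNR G i w ∧ w 0 = v}

/-- `nE G i u v` : the number of non-returning walks of `i + 1` edges whose
first edge is the directed edge `(u, v)`. -/
noncomputable def nE (G : SimpleGraph V) (i : ℕ) (u v : V) : ℕ :=
  Nat.card {w : Fin (i + 2) → V // IsNR G (i + 1) w ∧ w 0 = u ∧ w 1 = v}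


section Aux

open SimpleGraph

/-- Build a walk in `G` from a function `ℕ → V` with consecutive adjacency. -/
def mkWalk (G : SimpleGraph V) (f : ℕ → V) :
    ∀ (n : ℕ), (∀ k < n, G.Adj (f k) (f (k + 1))) → G.Walk (f 0) (f n)
  | 0, _ => Walk.nil
  | (n + 1), h =>
      (mkWalk G f n (fun k hk => h k (by omega))).concat (h n (by omega))

lemma mkWalk_length (G : SimpleGraph V) (f : ℕ → V) (n : ℕ) (h) :
    (mkWalk G f n h).length = n := by
  induction n with
  | zero => rfl
  | succ n ih => simp [mkWalk, Walk.length_concat, ih]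

lemma mkWalk_support (G : SimpleGraph V) (f : ℕ → V) (n : ℕ) (h) :
    (mkWalk G f n h).support = (List.range (n + 1)).map f := by
  induction n with
  | zero => rfl
  | succ n ih =>
      simp [mkWalk, Walk.support_concat, ih, List.range_succ]

lemma mkWalk_edges (G : SimpleGraph V) (f : ℕ → V) (n : ℕ) (h) :
    (mkWalk G f n h).edges = (List.range n).map (fun k => s(f k, f (k + 1))) := by
  induction n with
  | zero => rfl
  | succ n ih =>
      simp [mkWalk, Walk.edges_concat, ih, List.range_succ]

lemma no_cycle_fun (G : SimpleGraph V) (r : ℕ)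
    (hgirth : ∀ (a : V) (w : G.Walk a a), w.IsCycle → 2 * r + 1 ≤ w.length)
    (L : ℕ) (hL3 : 3 ≤ L) (hL2 : L ≤ 2 * r) (f : ℕ → V)
    (hadj : ∀ k < L, G.Adj (f k) (f (k + 1))) (hclose : f L = f 0)
    (hdist : ∀ a b, a < b → b < L → f a ≠ f b) : False := by
  set w : G.Walk (f 0) (f 0) := (mkWalk G f L hadj).copy rfl hclose with hw
  have hlen : w.length = L := by
    rw [hw, Walk.length_copy, mkWalk_length]
  have hcyc : w.IsCycle := by
    refine ⟨⟨⟨?_⟩, ?_⟩, ?_⟩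
    · -- edges nodup
      rw [hw, Walk.edges_copy, mkWalk_edges]
      refine List.Nodup.map_on ?_ List.nodup_range
      intro k hk l hl hEq
      rw [List.mem_range] at hk hl
      by_contra hne
      wlog hkl : k < l generalizing k l
      · exact this l hl k hk hEq.symm (Ne.symm hne) (by omega)
      rw [Sym2.eq_iff] at hEq
      rcases hEq with ⟨h1, _⟩ | ⟨h1, h2⟩
      · exact hdist k l hkl hl h1
      · rcases Nat.lt_or_ge (l + 1) L with hlL | hlL
        · exact hdist k (l + 1) (by omega) hlL h1
        · have hlL' : l + 1 = L := by omega
          have hk0 : k = 0 := by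
            by_contra hk0
            exact hdist 0 k (by omega) (by omega) (by rw [← hclose, ← hlL']; exact h1.symm)
          subst hk0
          have h1l : (1 : ℕ) < l := by omega
          exact hdist 1 l h1l (by omega) h2
    · -- ne nil
      intro hnil
      rw [hnil] at hlen
      simp at hlen
      omega
    · -- support tail nodup
      rw [hw, Walk.support_copy, mkWalk_support, List.range_succ_eq_map]
      simp only [List.map_cons, List.tail_cons, List.map_map]
      refine List.Nodup.map_on ?_ List.nodup_range
      intro k hk l hl hEq
      rw [List.mem_range] at hk hl
      simp only [Function.comp] at hEq
      by_contra hne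
      wlog hkl : k < l generalizing k l
      · exact this l hl k hk hEq.symm (Ne.symm hne) (by omega)
      rcases Nat.lt_or_ge (l + 1) L with hlL | hlL
      · exact hdist (k + 1) (l + 1) (by omega) hlL hEq
      · have hlL' : l + 1 = L := by omega
        exact hdist 0 (k + 1) (by omega) (by omega) (by rw [← hclose, ← hlL']; exact hEq.symm)
  have := hgirth (f 0) w hcyc
  omega


section
variable (G : SimpleGraph V) (r : ℕ)

/-- the statement of the key lemma at level `m` -/
def KeyStmt (m : ℕ) : Prop :=
  ∀ (i j : ℕ) (f g : ℕ → V), i + j = m → i + j ≤ 2 * r →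
    (∀ k < i, G.Adj (f k) (f (k + 1))) → (∀ k, k + 2 ≤ i → f k ≠ f (k + 2)) →
    (∀ k < j, G.Adj (g k) (g (k + 1))) → (∀ k, k + 2 ≤ j → g k ≠ g (k + 2)) →
    f 0 = g 0 → f i = g j → i = j ∧ ∀ k ≤ i, f k = g k

lemma keyAux (hgirth : ∀ (a : V) (w : G.Walk a a), w.IsCycle → 2 * r + 1 ≤ w.length)
    (n : ℕ) (IH : ∀ m, m < n → KeyStmt G r m)
    (i j : ℕ) (f g : ℕ → V) (hij : i ≤ j) (hn : i + j = n) (h2r : i + j ≤ 2 * r)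
    (fadj : ∀ k < i, G.Adj (f k) (f (k + 1))) (fnr : ∀ k, k + 2 ≤ i → f k ≠ f (k + 2))
    (gadj : ∀ k < j, G.Adj (g k) (g (k + 1))) (gnr : ∀ k, k + 2 ≤ j → g k ≠ g (k + 2))
    (h0 : f 0 = g 0) (hend : f i = g j) : i = j ∧ ∀ k ≤ i, f k = g k := by
  -- a reusable "segment" argument: any repetition g a = g b with b - a < n is impossible
  have segment : ∀ (j' : ℕ) (g' : ℕ → V), (∀ k < j', G.Adj (g' k) (g' (k + 1))) →
      (∀ k, k + 2 ≤ j' → g' k ≠ g' (k + 2)) →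
      ∀ a b, a < b → b ≤ j' → b - a < n → g' a ≠ g' b := by
    intro j' g' g'adj g'nr a b hab hbj hm hEq
    have := IH (b - a) hm 0 (b - a) (fun _ => g' a) (fun k => g' (a + k)) (by omega)
      (by omega)
      (fun k hk => absurd hk (by omega))
      (fun k hk => absurd hk (by omega))
      (by
        intro k hk
        have h := g'adj (a + k) (by omega)
        rwa [show a + k + 1 = a + (k + 1) from by omega] at h)
      (by
        intro k hk
        have h := g'nr (a + k) (by omega)
        rwa [show a + k + 2 = a + (k + 2) from by omega] at h)
      (by simp)
      (by show g' a = g' (a + (b - a)); rw [show a + (b - a) = b from by omega]; exact hEq)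
    omega
  by_cases hi : i = 0
  · subst hi
    by_cases hj : j = 0
    · subst hj
      exact ⟨rfl, fun k hk => by interval_cases k; exact h0⟩
    · exfalso
      have jpos : 0 < j := Nat.pos_of_ne_zero hj
      have hgend : g j = g 0 := by rw [← h0]; exact hend.symm
      have hrep : ∀ a b, a < b → b < j → g a ≠ g b := by
        intro a b hab hbj
        exact segment j g gadj gnr a b hab (by omega) (by omega)
      have hj1 : j ≠ 1 := by
        intro h; subst h
        exact (gadj 0 (by omega)).ne (by rw [hgend])
      have hj2 : j ≠ 2 := by
        intro h; subst h
        exact gnr 0 (by omega) hgend.symm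
      exact no_cycle_fun G r hgirth j (by omega) (by omega) g gadj hgend hrep
  · have hi1 : 1 ≤ i := Nat.one_le_iff_ne_zero.mpr hi
    have hj1 : 1 ≤ j := le_trans hi1 hij
    by_cases hcross : ∃ a b, a ≤ i ∧ b ≤ j ∧ ¬(a = 0 ∧ b = 0) ∧ ¬(a = i ∧ b = j) ∧ f a = g b
    · obtain ⟨a, b, hai, hbj, hne0, hneij, hfg⟩ := hcross
      have hne0' : a ≠ 0 ∨ b ≠ 0 := by tauto
      have hneij' : a ≠ i ∨ b ≠ j := by tauto
      obtain ⟨hab, hkpre⟩ := IH (a + b) (by omega) a b f g rfl (by omega)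
        (fun k hk => fadj k (by omega)) (fun k hk => fnr k (by omega))
        (fun k hk => gadj k (by omega)) (fun k hk => gnr k (by omega)) h0 hfg
      obtain ⟨hab2, hksuf⟩ := IH ((i - a) + (j - b)) (by omega) (i - a) (j - b)
        (fun k => f (a + k)) (fun k => g (b + k)) rfl (by omega)
        (by
          intro k hk
          have h := fadj (a + k) (by omega)
          rwa [show a + k + 1 = a + (k + 1) from by omega] at h)
        (by
          intro k hk
          have h := fnr (a + k) (by omega)
          rwa [show a + k + 2 = a + (k + 2) from by omega] at h)
        (by
          intro k hk
          have h := gadj (b + k) (by omega)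
          rwa [show b + k + 1 = b + (k + 1) from by omega] at h)
        (by
          intro k hk
          have h := gnr (b + k) (by omega)
          rwa [show b + k + 2 = b + (k + 2) from by omega] at h)
        (by simpa using hfg)
        (by
          show f (a + (i - a)) = g (b + (j - b))
          rw [show a + (i - a) = i from by omega, show b + (j - b) = j from by omega]
          exact hend)
      refine ⟨by omega, ?_⟩
      intro k hk
      rcases le_or_gt k a with h | h
      · exact hkpre k h
      · have h2 := hksuf (k - a) (by omega)
        rw [show a + (k - a) = k from by omega] at h2
        rw [show b + (k - a) = k from by omega] at h2
        exact h2
    · have hc : ∀ a b, a ≤ i → b ≤ j → f a = g b → (a = 0 ∧ b = 0) ∨ (a = i ∧ b = j) := by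
        intro a b ha hb hfg
        by_contra hcon
        rw [not_or] at hcon
        exact hcross ⟨a, b, ha, hb, hcon.1, hcon.2, hfg⟩
      have hfdist : ∀ a b, a < b → b ≤ i → f a ≠ f b := by
        intro a b hab hbi
        exact segment i f fadj fnr a b hab hbi (by omega)
      have hgdist : ∀ a b, a < b → b ≤ j → g a ≠ g b := by
        intro a b hab hbj
        exact segment j g gadj gnr a b hab hbj (by omega)
      by_cases h11 : i = 1 ∧ j = 1
      · obtain ⟨h1, h2⟩ := h11
        subst h1; subst h2
        refine ⟨rfl, ?_⟩
        intro k hk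
        interval_cases k
        · exact h0
        · exact hend
      · exfalso
        set h : ℕ → V := fun k => if k ≤ i then f k else g (i + j - k) with hdef
        have hval_le : ∀ k, k ≤ i → h k = f k := by
          intro k hk; simp [hdef, hk]
        have hval_gt : ∀ k, i < k → h k = g (i + j - k) := by
          intro k hk; simp [hdef, Nat.not_le.mpr hk]
        refine no_cycle_fun G r hgirth (i + j) (by omega) h2r h ?_ ?_ ?_
        · intro k hk
          rcases Nat.lt_trichotomy k i with hki | hki | hki
          · rw [hval_le k (by omega), hval_le (k + 1) (by omega)]
            exact fadj k hki
          · subst hki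
            rw [hval_le k le_rfl, hval_gt (k + 1) (by omega)]
            rw [show k + j - (k + 1) = j - 1 from by omega, hend]
            have h := gadj (j - 1) (by omega)
            rw [show j - 1 + 1 = j from by omega] at h
            exact h.symm
          · rw [hval_gt k hki, hval_gt (k + 1) (by omega)]
            have h := gadj (i + j - k - 1) (by omega)
            rw [show i + j - k - 1 + 1 = i + j - k from by omega] at h
            rw [show i + j - (k + 1) = i + j - k - 1 from by omega]
            exact h.symm
        · rw [hval_gt (i + j) (by omega), hval_le 0 (by omega)]
          rw [show i + j - (i + j) = 0 from by omega]
          exact h0.symm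
        · intro a b hab hbL
          rcases le_or_gt b i with hbi | hbi
          · rw [hval_le a (by omega), hval_le b hbi]
            exact hfdist a b hab hbi
          · rcases le_or_gt a i with hai | hai
            · rw [hval_le a hai, hval_gt b hbi]
              intro hEq
              have hb1 : 1 ≤ i + j - b := by omega
              have hb2 : i + j - b ≤ j - 1 := by omega
              rcases hc a (i + j - b) hai (by omega) hEq with ⟨_, h2⟩ | ⟨_, h2⟩ <;> omega
            · rw [hval_gt a hai, hval_gt b hbi]
              exact (hgdist (i + j - b) (i + j - a) (by omega) (by omega)).symm

lemma keyMain (hgirth : ∀ (a : V) (w : G.Walk a a), w.IsCycle → 2 * r + 1 ≤ w.length)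
    (n : ℕ) : KeyStmt G r n := by
  induction n using Nat.strong_induction_on with
  | _ n IH =>
    intro i j f g hn h2r fadj fnr gadj gnr h0 hend
    rcases Nat.le_total i j with hij | hij
    · exact keyAux G r hgirth n IH i j f g hij hn h2r fadj fnr gadj gnr h0 hend
    · obtain ⟨hji, hk⟩ := keyAux G r hgirth n IH j i g f hij (by omega) (by omega)
        gadj gnr fadj fnr h0.symm hend.symm
      exact ⟨hji.symm, fun k hk' => (hk k (by omega)).symm⟩

end


/-- extend a `Fin`-indexed walk to `ℕ` by clamping -/
def extFun {i : ℕ} (w : Fin (i + 1) → V) : ℕ → V :=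
  fun k => w ⟨min k i, by omega⟩

lemma extFun_eq {i : ℕ} (w : Fin (i + 1) → V) (k : ℕ) (hk : k ≤ i) :
    extFun w k = w ⟨k, by omega⟩ :=
  congrArg w (Fin.ext (by simp [min_eq_left hk]))

lemma endpoint_inj (G : SimpleGraph V) (r : ℕ)
    (hgirth : ∀ (a : V) (w : G.Walk a a), w.IsCycle → 2 * r + 1 ≤ w.length)
    (i j : ℕ) (hi : i ≤ r) (hj : j ≤ r)
    (w : Fin (i + 1) → V) (w' : Fin (j + 1) → V) (hw : IsNR G i w) (hw' : IsNR G j w')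
    (h0 : w 0 = w' 0) (hend : w ⟨i, by omega⟩ = w' ⟨j, by omega⟩) :
    i = j ∧ HEq w w' := by
  have key := keyMain G r hgirth (i + j) i j (extFun w) (extFun w') rfl (by omega)
    (by
      intro k hk
      rw [extFun_eq w k (by omega), extFun_eq w (k + 1) (by omega)]
      exact hw.1 k hk)
    (by
      intro k hk
      rw [extFun_eq w k (by omega), extFun_eq w (k + 2) (by omega)]
      exact hw.2 k hk)
    (by
      intro k hk
      rw [extFun_eq w' k (by omega), extFun_eq w' (k + 1) (by omega)]
      exact hw'.1 k hk)
    (by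
      intro k hk
      rw [extFun_eq w' k (by omega), extFun_eq w' (k + 2) (by omega)]
      exact hw'.2 k hk)
    (by
      rw [extFun_eq w 0 (by omega), extFun_eq w' 0 (by omega)]
      exact h0)
    (by
      rw [extFun_eq w i le_rfl, extFun_eq w' j le_rfl]
      exact hend)
  obtain ⟨hij, hk⟩ := key
  subst hij
  refine ⟨rfl, heq_of_eq ?_⟩
  funext x
  obtain ⟨k, hk'⟩ := x
  have h := hk k (by omega)
  rw [extFun_eq w k (by omega), extFun_eq w' k (by omega)] at h
  exact h


end Aux

theorem count_nonreturning_walks_odd_girth {V : Type*} [Fintype V] (G : SimpleGraph V)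
    (r : ℕ) (hg : G.girth = 2 * r + 1) (v : V) :
    Fintype.card V ≥ ∑ i ∈ Finset.range (r + 1), nV G i v := by
  classical
  -- girth lower bound on cycles
  have hgtop : G.egirth ≠ ⊤ := by
    intro h
    rw [SimpleGraph.girth, h] at hg
    simp at hg
  have hegirth : G.egirth = ((2 * r + 1 : ℕ) : ℕ∞) := by
    rw [← hg, SimpleGraph.girth, ENat.coe_toNat hgtop]
  have hgirth : ∀ (a : V) (w : G.Walk a a), w.IsCycle → 2 * r + 1 ≤ w.length := by
    intro a w hc
    have h := SimpleGraph.le_egirth.mp (le_of_eq hegirth.symm) a w hc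
    exact_mod_cast h
  -- the sigma type of all short non-returning walks from v
  set T : Fin (r + 1) → Type _ := fun i => {w : Fin (i.1 + 1) → V // IsNR G i.1 w ∧ w 0 = v}
    with hT
  letI : ∀ i, Fintype (T i) := fun i => Fintype.ofFinite _
  have hinj : Function.Injective
      (fun x : Σ i : Fin (r + 1), T i => x.2.1 ⟨x.1.1, Nat.lt_succ_self _⟩) := by
    rintro ⟨⟨i, hi⟩, w, hw, hw0⟩ ⟨⟨j, hj⟩, w', hw', hw0'⟩ hEq
    simp only at hEq
    obtain ⟨hij, hww⟩ := endpoint_inj G r hgirth i j (by omega) (by omega) w w' hw hw'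
      (by rw [hw0, hw0']) hEq
    subst hij
    have hww' := eq_of_heq hww
    subst hww'
    rfl
  have hcard : Fintype.card (Σ i : Fin (r + 1), T i) ≤ Fintype.card V :=
    Fintype.card_le_of_injective _ hinj
  rw [Fintype.card_sigma] at hcard
  have hnv : ∀ i : Fin (r + 1), nV G i.1 v = Fintype.card (T i) := by
    intro i
    rw [nV, Nat.card_eq_fintype_card]
  calc ∑ i ∈ Finset.range (r + 1), nV G i v
      = ∑ i : Fin (r + 1), nV G i.1 v := by rw [Finset.sum_range fun i => nV G i v]
    _ = ∑ i : Fin (r + 1), Fintype.card (T i) := Finset.sum_congr rfl fun i _ => hnv i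
    _ ≤ Fintype.card V := hcard
end

section
/- Let G be a simple undirected graph with n vertices, girth g = 2r+1, minimum degree at least 2, and average degree d̄. Then n ≥ 1 + d̄·∑_{i=0}^{r-1} (d̄-1)^i. -/
open Finset SimpleGraph Real List Set

set_option linter.unusedSectionVars false

instance chainDec' {α : Type*} {R : α → α → Prop} [DecidableRel R] (l : List α) :
    Decidable (l.Chain' R) := inferInstanceAs (Decidable (l.IsChain R))

section Analytic

/-- Log-form AM-GM over a finset. -/
lemma sum_log_le_card_mul_log' {ι : Type*} (s : Finset ι) (hs : s.Nonempty) (a : ι → ℝ)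
    (ha : ∀ i ∈ s, 0 < a i) :
    ∑ i ∈ s, Real.log (a i) ≤ s.card * Real.log ((∑ i ∈ s, a i) / s.card) := by
  have hS : 0 < ∑ i ∈ s, a i := Finset.sum_pos ha hs
  have hc : 0 < (s.card : ℝ) := by exact_mod_cast Finset.card_pos.2 hs
  have key : ∀ i ∈ s, Real.log (a i) ≤ Real.log ((∑ j ∈ s, a j) / s.card)
      + (a i * s.card / (∑ j ∈ s, a j) - 1) := by
    intro i hi
    have hai := ha i hi
    have h1 : 0 < a i * s.card / (∑ j ∈ s, a j) := by positivity
    have := Real.log_le_sub_one_of_pos h1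
    have heq : Real.log (a i) = Real.log ((∑ j ∈ s, a j) / s.card)
        + Real.log (a i * s.card / (∑ j ∈ s, a j)) := by
      rw [← Real.log_mul (by positivity) (by positivity)]
      congr 1
      field_simp
    linarith
  calc ∑ i ∈ s, Real.log (a i)
      ≤ ∑ i ∈ s, (Real.log ((∑ j ∈ s, a j) / s.card)
        + (a i * s.card / (∑ j ∈ s, a j) - 1)) := Finset.sum_le_sum key
    _ = s.card * Real.log ((∑ j ∈ s, a j) / s.card)
        + ((∑ i ∈ s, a i) * s.card / (∑ j ∈ s, a j) - s.card) := by
        rw [Finset.sum_add_distrib, Finset.sum_const, nsmul_eq_mul]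
        congr 1
        rw [Finset.sum_sub_distrib, Finset.sum_const, nsmul_eq_mul, mul_one]
        congr 1
        rw [← Finset.sum_div, ← Finset.sum_mul]
    _ = s.card * Real.log ((∑ j ∈ s, a j) / s.card) := by
        field_simp
        ring

lemma convexOn_aux : ConvexOn ℝ (Set.Ici (1:ℝ)) (fun x : ℝ => (x + 1) * Real.log x) := by
  have hd1 : ∀ x : ℝ, x ≠ 0 → HasDerivAt (fun x : ℝ => (x + 1) * Real.log x)
      (Real.log x + (x + 1) / x) x := by
    intro x hx
    have h := ((hasDerivAt_id x).add_const 1).mul (Real.hasDerivAt_log hx)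
    exact h.congr_deriv (by simp only [id]; field_simp)
  have hderiv : Set.EqOn (deriv (fun x : ℝ => (x + 1) * Real.log x))
      (fun x => Real.log x + (x + 1) / x) (Set.Ioi (1:ℝ)) := by
    intro x hx
    exact (hd1 x (by simp at hx; linarith)).deriv
  apply convexOn_of_deriv2_nonneg (convex_Ici 1)
  · apply ContinuousOn.mul (by fun_prop)
    apply ContinuousOn.log (by fun_prop)
    intro x hx
    simp at hx; linarith
  · rw [interior_Ici]
    intro x hx
    exact (hd1 x (by simp at hx; linarith)).differentiableAt.differentiableWithinAt
  · rw [interior_Ici]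
    intro x hx
    simp only [Set.mem_Ioi] at hx
    have h2 : HasDerivAt (fun x : ℝ => Real.log x + (x + 1) / x) (x⁻¹ + (-1) / x ^ 2) x := by
      have ha := Real.hasDerivAt_log (by linarith : x ≠ 0)
      have hb : HasDerivAt (fun x : ℝ => (x + 1) / x) ((-1) / x ^ 2) x := by
        have := ((hasDerivAt_id x).add_const 1).div (hasDerivAt_id x) (by linarith : x ≠ 0)
        exact this.congr_deriv (by simp only [id]; ring)
      exact ha.add hb
    have : HasDerivAt (deriv fun x : ℝ => (x + 1) * Real.log x) (x⁻¹ + (-1) / x ^ 2) x := by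
      apply h2.congr_of_eventuallyEq
      filter_upwards [isOpen_Ioi.mem_nhds hx] with y hy
      exact hderiv hy
    exact this.differentiableAt.differentiableWithinAt
  · rw [interior_Ici]
    intro x hx
    simp only [Set.mem_Ioi] at hx
    have h2 : HasDerivAt (fun x : ℝ => Real.log x + (x + 1) / x) (x⁻¹ + (-1) / x ^ 2) x := by
      have ha := Real.hasDerivAt_log (by linarith : x ≠ 0)
      have hb : HasDerivAt (fun x : ℝ => (x + 1) / x) ((-1) / x ^ 2) x := by
        have := ((hasDerivAt_id x).add_const 1).div (hasDerivAt_id x) (by linarith : x ≠ 0)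
        exact this.congr_deriv (by simp only [id]; ring)
      exact ha.add hb
    have h3 : HasDerivAt (deriv fun x : ℝ => (x + 1) * Real.log x) (x⁻¹ + (-1) / x ^ 2) x := by
      apply h2.congr_of_eventuallyEq
      filter_upwards [isOpen_Ioi.mem_nhds hx] with y hy
      exact hderiv hy
    simp only [Function.iterate_succ, Function.iterate_zero, Function.comp_apply, id]
    rw [h3.deriv]
    have h4 : x⁻¹ + (-1) / x ^ 2 = (x - 1) / x ^ 2 := by
      field_simp
      ring
    rw [h4]
    apply div_nonneg (by linarith) (by positivity)


lemma jensen_deg' {ι : Type*} (s : Finset ι) (hs : s.Nonempty) (a : ι → ℝ)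
    (ha : ∀ i ∈ s, 1 ≤ a i) :
    (∑ i ∈ s, (a i + 1)) * Real.log ((∑ i ∈ s, a i) / s.card)
      ≤ ∑ i ∈ s, (a i + 1) * Real.log (a i) := by
  have hc : 0 < (s.card : ℝ) := by exact_mod_cast Finset.card_pos.2 hs
  have key := convexOn_aux.map_sum_le (t := s) (w := fun _ => (s.card : ℝ)⁻¹) (p := a)
    (fun i _ => by positivity)
    (by rw [Finset.sum_const, nsmul_eq_mul]; field_simp)
    (fun i hi => ha i hi)
  simp only [smul_eq_mul] at key
  have hμ : ∑ i ∈ s, (s.card : ℝ)⁻¹ * a i = (∑ i ∈ s, a i) / s.card := by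
    rw [← Finset.mul_sum]; ring
  rw [hμ] at key
  have h2 : (∑ i ∈ s, (a i + 1)) = s.card * ((∑ i ∈ s, a i) / s.card + 1) := by
    rw [Finset.sum_add_distrib, Finset.sum_const, nsmul_eq_mul, mul_one]
    field_simp
  rw [h2]
  have h3 : ∑ i ∈ s, (s.card : ℝ)⁻¹ * ((a i + 1) * Real.log (a i))
      = (∑ i ∈ s, (a i + 1) * Real.log (a i)) / s.card := by
    rw [← Finset.mul_sum]; ring
  rw [h3] at key
  rw [mul_assoc]
  calc (s.card : ℝ) * (((∑ i ∈ s, a i) / s.card + 1) * Real.log ((∑ i ∈ s, a i) / s.card))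
      ≤ (s.card : ℝ) * ((∑ i ∈ s, (a i + 1) * Real.log (a i)) / s.card) := by
        apply mul_le_mul_of_nonneg_left key hc.le
    _ = ∑ i ∈ s, (a i + 1) * Real.log (a i) := by field_simp

end Analytic

section ListLemmas

/-- cyclic non-backtracking condition on a list of edges -/
def ccnb' {α : Type*} (l : List α) : Prop :=
  l.Chain' (· ≠ ·) ∧ ∀ x ∈ l.getLast?, ∀ y ∈ l.head?, x ≠ y

lemma ccnb'_rotate_one {α : Type*} (a : α) (t : List α) (h : ccnb' (a :: t)) :
    ccnb' (t ++ [a]) := by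
  obtain ⟨hch, hwrap⟩ := h
  cases t with
  | nil =>
    exact absurd rfl (hwrap a (by simp) a (by simp))
  | cons b t' =>
    have hab : a ≠ b := (List.isChain_cons_cons.1 hch).1
    have hch' : List.Chain' (· ≠ ·) (b :: t') := (List.isChain_cons_cons.1 hch).2
    constructor
    · rw [List.Chain', List.isChain_append]
      refine ⟨hch', by simp, ?_⟩
      intro x hx y hy
      simp only [List.head?_cons, Option.mem_def, Option.some.injEq] at hy
      subst hy
      exact hwrap x (by rw [List.getLast?_cons_cons]; exact hx) a (by simp)
    · intro x hx y hy
      have h1 : ((b :: t') ++ [a]).getLast? = some a := by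
        rw [List.getLast?_concat]
      have h2 : ((b :: t') ++ [a]).head? = some b := by simp
      rw [h1] at hx
      rw [h2] at hy
      simp only [Option.mem_def, Option.some.injEq] at hx hy
      subst hx; subst hy
      exact hab
lemma ccnb'_rotate {α : Type*} : ∀ (n : ℕ) (l : List α), ccnb' l → ccnb' (l.rotate n) := by
  intro n
  induction n with
  | zero => intro l h; simpa using h
  | succ n ih =>
    intro l h
    cases l with
    | nil => simpa using h
    | cons a t =>
      rw [List.rotate_cons_succ]
      exact ih _ (ccnb'_rotate_one a t h)

lemma ccnb'_of_isRotated {α : Type*} {l l' : List α} (h : l ~r l') (hc : ccnb' l) : ccnb' l' := by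
  obtain ⟨n, rfl⟩ := h
  exact ccnb'_rotate n l hc

end ListLemmas

section WalkLemmas

lemma ccnb'_def {α : Type*} (l : List α) : ccnb' l ↔
  (l.Chain' (· ≠ ·) ∧ ∀ x ∈ l.getLast?, ∀ y ∈ l.head?, x ≠ y) := Iff.rfl

variable {V : Type*} {G : SimpleGraph V}

theorem cycle_of_cnb [DecidableEq V] :
    ∀ (L : ℕ) (v : V) (W : G.Walk v v), W.length = L → 1 ≤ L →
      W.edges.Chain' (· ≠ ·) →
      ∃ (u : V) (c : G.Walk u u), c.IsCycle ∧ c.length ≤ L := by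
  intro L
  induction L using Nat.strong_induction_on with
  | _ L IH =>
    intro v W hlen h1 hch
    cases W with
    | nil => simp at hlen; omega
    | @cons _ b _ hadj W₁ =>
      have hvb : v ≠ b := hadj.ne
      have hW₁len : 1 ≤ W₁.length := by
        rcases Nat.eq_zero_or_pos W₁.length with h0 | h
        · exact absurd (SimpleGraph.Walk.eq_of_length_eq_zero h0) (Ne.symm hvb)
        · exact h
      -- decompose the last edge
      obtain ⟨c, hvc, Q, hQ⟩ := SimpleGraph.Walk.exists_eq_cons_of_ne hvb W₁.reverse
      have hW₁edges : W₁.edges = Q.edges.reverse ++ [s(v, c)] := by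
        have h1' : W₁.reverse.edges = s(v, c) :: Q.edges := by rw [hQ]; simp
        have h2' : W₁.edges.reverse = s(v, c) :: Q.edges := by
          rw [← SimpleGraph.Walk.edges_reverse]; exact h1'
        have := congrArg List.reverse h2'
        simpa using this
      have hWedges : (SimpleGraph.Walk.cons hadj W₁).edges
          = s(v, b) :: (Q.edges.reverse ++ [s(v, c)]) := by
        rw [SimpleGraph.Walk.edges_cons, hW₁edges]
      have hlast : (SimpleGraph.Walk.cons hadj W₁).edges.getLast? = some s(v, c) := by
        rw [hWedges, ← List.cons_append, List.getLast?_concat]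
      have hhead : (SimpleGraph.Walk.cons hadj W₁).edges.head? = some s(v, b) := by
        rw [hWedges]; simp
      by_cases hwrap : s(v, c) = s(v, b)
      · -- the wrap backtracks; strip the first and last edges
        have hcb : c = b := Sym2.congr_right.1 hwrap
        subst hcb
        -- Q : G.Walk c b with c = b
        have hQne : 1 ≤ Q.length := by
          rcases Nat.eq_zero_or_pos Q.length with h0 | h
          · exfalso
            have hQnil : Q.edges = [] := List.eq_nil_of_length_eq_zero
              (by rw [SimpleGraph.Walk.length_edges]; exact h0)
            rw [hWedges, hQnil] at hch
            simp only [List.reverse_nil, List.nil_append] at hch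
            rw [hwrap] at hch
            rw [List.Chain', List.isChain_cons_cons] at hch
            exact hch.1 rfl
          · exact h
        have hQlt : Q.length < L := by
          have : (SimpleGraph.Walk.cons hadj W₁).length = W₁.length + 1 := by simp
          have h2' : W₁.reverse.length = Q.length + 1 := by rw [hQ]; simp
          have h3' : W₁.length = Q.length + 1 := by
            rw [← SimpleGraph.Walk.length_reverse W₁]; exact h2'
          omega
        have hQch : Q.edges.reverse.Chain' (· ≠ ·) := by
          rw [hWedges] at hch
          have := (List.isChain_cons.1 hch).2
          exact (List.isChain_append.1 this).1
        have hMch : Q.reverse.edges.Chain' (· ≠ ·) := by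
          rw [SimpleGraph.Walk.edges_reverse]; exact hQch
        obtain ⟨u, cyc, hcyc, hle⟩ := IH Q.length hQlt c Q.reverse
          (by rw [SimpleGraph.Walk.length_reverse]) (by omega) hMch
        exact ⟨u, cyc, hcyc, by omega⟩
      · -- cyclically reduced
        have hccnb : ccnb' (SimpleGraph.Walk.cons hadj W₁).edges := by
          rw [ccnb'_def]
          refine ⟨hch, ?_⟩
          intro x hx y hy
          rw [hlast] at hx
          rw [hhead] at hy
          simp only [Option.mem_def, Option.some.injEq] at hx hy
          subst hx; subst hy
          exact hwrap
        by_cases hdup : (SimpleGraph.Walk.cons hadj W₁).support.tail.Nodup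
        · -- it is a cycle
          refine ⟨v, SimpleGraph.Walk.cons hadj W₁, ?_, le_of_eq hlen⟩
          rw [SimpleGraph.Walk.isCycle_def]
          refine ⟨?_, by simp, hdup⟩
          rw [SimpleGraph.Walk.isTrail_def, SimpleGraph.Walk.edges_cons, List.nodup_cons]
          have hsupp : W₁.support.Nodup := by
            have : (SimpleGraph.Walk.cons hadj W₁).support.tail = W₁.support := by
              rw [SimpleGraph.Walk.support_cons]; rfl
            rwa [this] at hdup
          constructor
          · -- s(v,b) ∉ W₁.edges
            intro hmem
            rw [hW₁edges, List.mem_append] at hmem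
            rcases hmem with hmem | hmem
            · -- in Q.edges.reverse
              rw [List.mem_reverse] at hmem
              have hv_in_Q : v ∈ Q.support :=
                SimpleGraph.Walk.fst_mem_support_of_mem_edges Q hmem
              have hrevsupp : W₁.reverse.support = v :: Q.support := by
                rw [hQ, SimpleGraph.Walk.support_cons]
              have : W₁.reverse.support.Nodup := by
                rw [SimpleGraph.Walk.support_reverse]
                exact List.nodup_reverse.2 hsupp
              rw [hrevsupp, List.nodup_cons] at this
              exact this.1 hv_in_Q
            · -- equals s(v,c)
              simp only [List.mem_singleton] at hmem
              exact hwrap hmem.symm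
          · exact (SimpleGraph.Walk.IsPath.mk' hsupp).isTrail.edges_nodup
        · -- duplicated vertex: rotate and split
          have hexists : ∃ x, 2 ≤ (SimpleGraph.Walk.cons hadj W₁).support.tail.count x := by
            by_contra hcon
            push_neg at hcon
            exact hdup (List.nodup_iff_count_le_one.2 fun a => by have := hcon a; omega)
          obtain ⟨x, hxcount⟩ := hexists
          have hx_tail : x ∈ (SimpleGraph.Walk.cons hadj W₁).support.tail := by
            rw [← List.count_pos_iff]
            omega
          have hx_mem : x ∈ (SimpleGraph.Walk.cons hadj W₁).support :=
            List.mem_of_mem_tail hx_tail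
          set W' := (SimpleGraph.Walk.cons hadj W₁).rotate x hx_mem with hW'
          have hW'edges : W'.edges ~r (SimpleGraph.Walk.cons hadj W₁).edges :=
            SimpleGraph.Walk.rotate_edges _ x hx_mem
          have hccnb' : ccnb' W'.edges := ccnb'_of_isRotated hW'edges.symm hccnb
          have hW'len : W'.length = L := by
            have := hW'edges.perm.length_eq
            rw [SimpleGraph.Walk.length_edges, SimpleGraph.Walk.length_edges] at this
            omega
          have hW'count : 2 ≤ W'.support.tail.count x := by
            have hrot := SimpleGraph.Walk.support_rotate (SimpleGraph.Walk.cons hadj W₁) x hx_mem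
            rw [hrot.perm.count_eq]
            exact hxcount
          have hW'ch : W'.edges.Chain' (· ≠ ·) := ((ccnb'_def _).1 hccnb').1
          cases hW'cases : W' with
          | nil =>
            rw [hW'cases] at hW'len
            simp at hW'len
            omega
          | @cons _ y _ hxy T =>
            have hTsupp : T.support = W'.support.tail := by
              rw [hW'cases, SimpleGraph.Walk.support_cons]; rfl
            have hTcount : 2 ≤ T.support.count x := by rw [hTsupp]; exact hW'count
            have hxT : x ∈ T.support := by
              rw [← List.count_pos_iff]; omega
            set T₁ := T.takeUntil x hxT with hT₁
            set T₂ := T.dropUntil x hxT with hT₂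
            have hspec : T₁.append T₂ = T := SimpleGraph.Walk.take_spec T hxT
            have hlen12 : T₁.length + T₂.length = T.length := by
              rw [← hspec, SimpleGraph.Walk.length_append]
            have hT₂pos : 1 ≤ T₂.length := by
              rcases Nat.eq_zero_or_pos T₂.length with h0 | h
              · exfalso
                have hT₂nil : T₂ = SimpleGraph.Walk.nil := by
                  cases hT2c : T₂ with
                  | nil => rfl
                  | cons h t => rw [hT2c] at h0; simp at h0
                have hT1T : T₁ = T := by rw [← hspec, hT₂nil]; simp
                have := SimpleGraph.Walk.count_support_takeUntil_eq_one T hxT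
                rw [← hT₁] at this
                rw [hT1T] at this
                omega
              · exact h
            have hTlen : T.length + 1 = L := by
              rw [← hW'len, hW'cases]; simp
            have hBlen : T₁.length + 1 < L := by omega
            have hBch : (SimpleGraph.Walk.cons hxy T₁).edges.Chain' (· ≠ ·) := by
              have hpre : (SimpleGraph.Walk.cons hxy T₁).edges <+: W'.edges := by
                rw [hW'cases, SimpleGraph.Walk.edges_cons, SimpleGraph.Walk.edges_cons, ← hspec,
                  SimpleGraph.Walk.edges_append]
                exact ⟨T₂.edges, by simp⟩
              exact List.IsChain.prefix hW'ch hpre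
            obtain ⟨u, cyc, hcyc, hle⟩ := IH (T₁.length + 1) hBlen x
              (SimpleGraph.Walk.cons hxy T₁) (by simp) (by omega) hBch
            exact ⟨u, cyc, hcyc, by omega⟩


theorem nb_walks_eq [DecidableEq V] (r : ℕ)
    (hg : ∀ (u : V) (c : G.Walk u u), c.IsCycle → 2 * r + 1 ≤ c.length) :
    ∀ (N : ℕ) (a z : V) (p q : G.Walk a z), p.length + q.length = N →
      p.length ≤ r → q.length ≤ r →
      p.edges.Chain' (· ≠ ·) → q.edges.Chain' (· ≠ ·) → p = q := by
  intro N
  induction N using Nat.strong_induction_on with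
  | _ N IH =>
    intro a z p q hN hp hq hpc hqc
    cases p with
    | nil =>
      cases q with
      | nil => rfl
      | @cons _ b _ h q' =>
        exfalso
        obtain ⟨u, cyc, hcyc, hle⟩ := cycle_of_cnb (SimpleGraph.Walk.cons h q').length a
          (SimpleGraph.Walk.cons h q') rfl (by simp) hqc
        have := hg u cyc hcyc
        have hql : (SimpleGraph.Walk.cons h q').length ≤ r := hq
        omega
    | @cons _ b₁ _ h₁ p' =>
      cases q with
      | nil =>
        exfalso
        obtain ⟨u, cyc, hcyc, hle⟩ := cycle_of_cnb (SimpleGraph.Walk.cons h₁ p').length a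
          (SimpleGraph.Walk.cons h₁ p') rfl (by simp) hpc
        have := hg u cyc hcyc
        have hpl : (SimpleGraph.Walk.cons h₁ p').length ≤ r := hp
        omega
      | @cons _ b₂ _ h₂ q' =>
        by_cases hb : b₁ = b₂
        · subst hb
          have hlp : p'.length ≤ r := by
            have : (SimpleGraph.Walk.cons h₁ p').length = p'.length + 1 := by simp
            omega
          have hlq : q'.length ≤ r := by
            have : (SimpleGraph.Walk.cons h₂ q').length = q'.length + 1 := by simp
            omega
          have hsum : p'.length + q'.length < N := by
            have e1 : (SimpleGraph.Walk.cons h₁ p').length = p'.length + 1 := by simp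
            have e2 : (SimpleGraph.Walk.cons h₂ q').length = q'.length + 1 := by simp
            omega
          have hpc' : p'.edges.Chain' (· ≠ ·) := by
            rw [SimpleGraph.Walk.edges_cons] at hpc
            exact (List.isChain_cons.1 hpc).2
          have hqc' : q'.edges.Chain' (· ≠ ·) := by
            rw [SimpleGraph.Walk.edges_cons] at hqc
            exact (List.isChain_cons.1 hqc).2
          have := IH (p'.length + q'.length) hsum b₁ z p' q' rfl hlp hlq hpc' hqc'
          rw [this]
        · exfalso
          -- glue the two walks into a closed walk at z
          set W := (SimpleGraph.Walk.cons h₁ p').reverse.append (SimpleGraph.Walk.cons h₂ q')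
            with hW
          have hWlen : W.length = (SimpleGraph.Walk.cons h₁ p').length
              + (SimpleGraph.Walk.cons h₂ q').length := by
            rw [hW, SimpleGraph.Walk.length_append, SimpleGraph.Walk.length_reverse]
          have hWedges : W.edges
              = (SimpleGraph.Walk.cons h₁ p').edges.reverse
                ++ (SimpleGraph.Walk.cons h₂ q').edges := by
            rw [hW, SimpleGraph.Walk.edges_append, SimpleGraph.Walk.edges_reverse]
          have hWch : W.edges.Chain' (· ≠ ·) := by
            rw [hWedges, List.Chain', List.isChain_append]
            refine ⟨?_, hqc, ?_⟩
            · rw [List.isChain_reverse]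
              exact List.IsChain.imp (fun a b hab => Ne.symm hab) hpc
            · intro x hx y hy
              rw [List.getLast?_reverse] at hx
              rw [SimpleGraph.Walk.edges_cons] at hx
              rw [SimpleGraph.Walk.edges_cons] at hy
              simp only [List.head?_cons, Option.mem_def, Option.some.injEq] at hx hy
              subst hx; subst hy
              intro hcon
              exact hb (Sym2.congr_right.1 hcon)
          obtain ⟨u, cyc, hcyc, hle⟩ := cycle_of_cnb W.length z W rfl
            (by rw [hWlen]; simp; omega) hWch
          have := hg u cyc hcyc
          have : 2 * r + 1 ≤ W.length := le_trans this hle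
          rw [hWlen] at this
          omega

theorem sum_nb_card_le_one [Fintype V] [DecidableEq V] [DecidableRel G.Adj] (r : ℕ)
    (hg : ∀ (u : V) (c : G.Walk u u), c.IsCycle → 2 * r + 1 ≤ c.length) (a z : V) :
    ∑ k ∈ Finset.range (r+1),
      ((G.finsetWalkLength k a z).filter (fun p => p.edges.Chain' (· ≠ ·))).card ≤ 1 := by
  classical
  rw [← Finset.card_biUnion]
  · apply Finset.card_le_one.2
    intro p hp q hq
    simp only [Finset.mem_biUnion, Finset.mem_filter, Finset.mem_range,
      SimpleGraph.mem_finsetWalkLength_iff] at hp hq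
    obtain ⟨k₁, hk₁, hplen, hpc⟩ := hp
    obtain ⟨k₂, hk₂, hqlen, hqc⟩ := hq
    exact nb_walks_eq r hg (p.length + q.length) a z p q rfl (by omega) (by omega) hpc hqc
  · intro k₁ _ k₂ _ hne
    rw [Function.onFun, Finset.disjoint_left]
    intro p hp hq
    rw [Finset.mem_filter, SimpleGraph.mem_finsetWalkLength_iff] at hp hq
    exact hne (hp.1.symm.trans hq.1)

end WalkLemmas

section GraphCount

variable {V : Type*} [Fintype V] [DecidableEq V] (G : SimpleGraph V) [DecidableRel G.Adj]


/-- Non-backtracking continuation counts. -/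
def xc' : ℕ → V → V → ℕ
  | 0, _, _ => 1
  | k+1, u, v => ∑ w ∈ (G.neighborFinset v).erase u, xc' k v w

lemma xc'_zero (u v : V) : xc' G 0 u v = 1 := rfl

lemma xc'_succ (k : ℕ) (u v : V) :
    xc' G (k+1) u v = ∑ w ∈ (G.neighborFinset v).erase u, xc' G k v w := rfl

lemma one_le_xc' (h2 : ∀ v : V, 2 ≤ G.degree v) :
    ∀ (k : ℕ) (u v : V), G.Adj u v → 1 ≤ xc' G k u v := by
  intro k
  induction k with
  | zero => intro u v _; exact le_refl 1
  | succ k ih =>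
    intro u v huv
    rw [xc'_succ]
    have hcard : ((G.neighborFinset v).erase u).card = G.degree v - 1 := by
      rw [Finset.card_erase_of_mem (by rw [mem_neighborFinset]; exact huv.symm)]
      rw [card_neighborFinset_eq_degree]
    have h1 : 1 ≤ ((G.neighborFinset v).erase u).card := by
      rw [hcard]; have := h2 v; omega
    calc 1 ≤ ∑ _w ∈ (G.neighborFinset v).erase u, 1 := by
          rw [Finset.sum_const, smul_eq_mul, mul_one]; exact_mod_cast h1
      _ ≤ ∑ w ∈ (G.neighborFinset v).erase u, xc' G k v w := by
          apply Finset.sum_le_sum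
          intro w hw
          exact ih v w ((mem_neighborFinset G v w).1 (Finset.mem_of_mem_erase hw))

/-- Finset of non-backtracking walks of length `k` from `a` to `z` not starting
with the edge to `avoid`. -/
def nbs' (k : ℕ) (a z avoid : V) : Finset (G.Walk a z) :=
  (G.finsetWalkLength k a z).filter
    (fun p => p.edges.Chain' (· ≠ ·) ∧ p.edges.head? ≠ some s(a, avoid))

lemma mem_nbs' {k : ℕ} {a z avoid : V} {p : G.Walk a z} :
    p ∈ nbs' G k a z avoid ↔ p.length = k ∧ p.edges.Chain' (· ≠ ·)
      ∧ p.edges.head? ≠ some s(a, avoid) := by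
  rw [nbs', Finset.mem_filter, SimpleGraph.mem_finsetWalkLength_iff]

/-- Destructor for walks into sigma type. -/
def toSig {a z : V} : G.Walk a z → (Σ w : V, G.Walk w z)
  | SimpleGraph.Walk.nil => ⟨a, SimpleGraph.Walk.nil⟩
  | SimpleGraph.Walk.cons (v := w) _ t => ⟨w, t⟩

lemma nbs'_succ_card (k : ℕ) (v z u : V) :
    (nbs' G (k+1) v z u).card
      = ∑ w ∈ (G.neighborFinset v).erase u, (nbs' G k w z v).card := by
  rw [← Finset.card_sigma]
  refine Finset.card_bij' (fun p _ => toSig G p)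
    (fun b hb => SimpleGraph.Walk.cons
      (by
        have := (Finset.mem_sigma.1 hb).1
        rw [Finset.mem_erase, mem_neighborFinset] at this
        exact this.2 : G.Adj v b.1) b.2) ?hi ?hj ?li ?ri
  case hi => -- forward membership
    intro p hp
    rw [mem_nbs'] at hp
    obtain ⟨hlen, hch, hhd⟩ := hp
    cases p with
    | nil => simp at hlen
    | @cons _ w _ h t =>
      simp only [toSig]
      rw [Finset.mem_sigma]
      constructor
      · rw [Finset.mem_erase, mem_neighborFinset]
        refine ⟨?_, h⟩
        intro hwu
        subst hwu
        rw [SimpleGraph.Walk.edges_cons] at hhd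
        simp at hhd
      · rw [mem_nbs']
        rw [SimpleGraph.Walk.edges_cons] at hch hhd
        rw [List.Chain', List.isChain_cons] at hch
        refine ⟨by simpa using hlen, hch.2, ?_⟩
        intro hcontra
        have := hch.1 s(w, v) (by rw [hcontra]; rfl)
        exact this (Sym2.eq_swap)
  case hj => -- backward membership
    intro b hb
    have hb' := Finset.mem_sigma.1 hb
    obtain ⟨hw, hmem⟩ := hb'
    rw [Finset.mem_erase, mem_neighborFinset] at hw
    rw [mem_nbs'] at hmem
    obtain ⟨hlen, hch, hhd⟩ := hmem
    rw [mem_nbs']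
    refine ⟨by simpa using hlen, ?_, ?_⟩
    · rw [SimpleGraph.Walk.edges_cons, List.Chain', List.isChain_cons]
      refine ⟨?_, hch⟩
      intro y hy
      obtain ⟨w, t⟩ := b
      cases t with
      | nil => simp at hy
      | @cons _ c _ h' t' =>
        rw [SimpleGraph.Walk.edges_cons] at hy
        simp only [List.head?_cons, Option.mem_def, Option.some.injEq] at hy
        subst hy
        intro hcontra
        apply hhd
        rw [SimpleGraph.Walk.edges_cons, List.head?_cons]
        have h1 : s(w, c) = s(w, v) := by
          rw [← hcontra, Sym2.eq_swap]
        rw [h1]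
    · rw [SimpleGraph.Walk.edges_cons, List.head?_cons]
      intro hcontra
      simp only [Option.some.injEq] at hcontra
      exact hw.1 (Sym2.congr_right.1 hcontra)
  case li => -- left_inv
    intro p hp
    rw [mem_nbs'] at hp
    cases p with
    | nil => simp at hp
    | cons h t => rfl
  case ri => -- right_inv
    intro b _
    obtain ⟨w, t⟩ := b
    rfl


/- sum over adjacent pairs swap -/
lemma adj_sum_swap (F : V → V → ℝ) :
    ∑ u, ∑ v ∈ G.neighborFinset u, F u v = ∑ v, ∑ u ∈ G.neighborFinset v, F u v := by
  have key : ∀ (H : V → V → ℝ), ∑ u, ∑ v ∈ G.neighborFinset u, H u v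
      = ∑ u, ∑ v, if G.Adj u v then H u v else 0 := by
    intro H
    apply Finset.sum_congr rfl
    intro u _
    rw [show G.neighborFinset u = Finset.univ.filter (G.Adj u) by
      ext w; simp [mem_neighborFinset]]
    rw [Finset.sum_filter]
  rw [key, key (fun u v => F v u), Finset.sum_comm]
  apply Finset.sum_congr rfl; intro u _
  apply Finset.sum_congr rfl; intro v _
  congr 1
  simp [G.adj_comm]

lemma sum_nbr_erase (v : V) (h : V → ℝ) :
    ∑ u ∈ G.neighborFinset v, ∑ w ∈ (G.neighborFinset v).erase u, h w
      = ((G.degree v : ℝ) - 1) * ∑ w ∈ G.neighborFinset v, h w := by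
  have : ∀ u ∈ G.neighborFinset v, ∑ w ∈ (G.neighborFinset v).erase u, h w
      = (∑ w ∈ G.neighborFinset v, h w) - h u := by
    intro u hu
    rw [Finset.sum_erase_eq_sub hu]
  rw [Finset.sum_congr rfl this, Finset.sum_sub_distrib, Finset.sum_const, nsmul_eq_mul,
    card_neighborFinset_eq_degree]
  ring

lemma Lstep (h2 : ∀ v : V, 2 ≤ G.degree v) (k : ℕ) :
    (∑ u, ∑ v ∈ G.neighborFinset u, Real.log ((G.degree v : ℝ) - 1))
      + ∑ u, ∑ v ∈ G.neighborFinset u, Real.log (xc' G k u v)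
    ≤ ∑ u, ∑ v ∈ G.neighborFinset u, Real.log (xc' G (k+1) u v) := by
  -- per-edge inequality
  have per_edge : ∀ u v, G.Adj u v →
      Real.log ((G.degree v : ℝ) - 1)
        + ((G.degree v : ℝ) - 1)⁻¹ * ∑ w ∈ (G.neighborFinset v).erase u, Real.log (xc' G k v w)
      ≤ Real.log (xc' G (k+1) u v) := by
    intro u v huv
    have hmem : u ∈ G.neighborFinset v := by rw [mem_neighborFinset]; exact huv.symm
    have hcard : ((G.neighborFinset v).erase u).card = G.degree v - 1 := by
      rw [Finset.card_erase_of_mem hmem, card_neighborFinset_eq_degree]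
    have hdeg2 := h2 v
    have hcardR : (((G.neighborFinset v).erase u).card : ℝ) = (G.degree v : ℝ) - 1 := by
      rw [hcard]; push_cast [Nat.cast_sub (by omega : 1 ≤ G.degree v)]; ring
    have hcpos : (0:ℝ) < (G.degree v : ℝ) - 1 := by
      have : (2:ℝ) ≤ (G.degree v : ℝ) := by exact_mod_cast hdeg2
      linarith
    have hne : ((G.neighborFinset v).erase u).Nonempty := by
      rw [← Finset.card_pos, hcard]; omega
    have hpos : ∀ w ∈ (G.neighborFinset v).erase u, (0:ℝ) < (xc' G k v w : ℝ) := by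
      intro w hw
      have := one_le_xc' G h2 k v w ((mem_neighborFinset G v w).1 (Finset.mem_of_mem_erase hw))
      exact_mod_cast lt_of_lt_of_le zero_lt_one (by exact_mod_cast this)
    have key := sum_log_le_card_mul_log' ((G.neighborFinset v).erase u) hne
      (fun w => (xc' G k v w : ℝ)) hpos
    rw [hcardR] at key
    have hSpos : (0:ℝ) < ∑ w ∈ (G.neighborFinset v).erase u, (xc' G k v w : ℝ) :=
      Finset.sum_pos hpos hne
    have hlogdiv : Real.log ((∑ w ∈ (G.neighborFinset v).erase u, (xc' G k v w : ℝ))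
        / ((G.degree v : ℝ) - 1))
        = Real.log (∑ w ∈ (G.neighborFinset v).erase u, (xc' G k v w : ℝ))
          - Real.log ((G.degree v : ℝ) - 1) :=
      Real.log_div (ne_of_gt hSpos) (ne_of_gt hcpos)
    rw [hlogdiv] at key
    have hxc : Real.log (xc' G (k+1) u v)
        = Real.log (∑ w ∈ (G.neighborFinset v).erase u, (xc' G k v w : ℝ)) := by
      rw [xc'_succ]
      push_cast
      rfl
    rw [hxc]
    have h3 : ((G.degree v : ℝ) - 1)⁻¹ * ∑ w ∈ (G.neighborFinset v).erase u,
        Real.log (xc' G k v w)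
        ≤ Real.log (∑ w ∈ (G.neighborFinset v).erase u, (xc' G k v w : ℝ))
          - Real.log ((G.degree v : ℝ) - 1) := by
      rw [inv_mul_le_iff₀ hcpos]
      exact key
    linarith
  -- sum it
  have step1 : ∑ u, ∑ v ∈ G.neighborFinset u, (Real.log ((G.degree v : ℝ) - 1)
      + ((G.degree v : ℝ) - 1)⁻¹ * ∑ w ∈ (G.neighborFinset v).erase u, Real.log (xc' G k v w))
      ≤ ∑ u, ∑ v ∈ G.neighborFinset u, Real.log (xc' G (k+1) u v) := by
    apply Finset.sum_le_sum
    intro u _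
    apply Finset.sum_le_sum
    intro v hv
    exact per_edge u v ((mem_neighborFinset G u v).1 hv)
  refine le_trans (le_of_eq ?_) step1
  have hB : (∑ u, ∑ v ∈ G.neighborFinset u,
        ((G.degree v : ℝ) - 1)⁻¹ * ∑ w ∈ (G.neighborFinset v).erase u, Real.log (xc' G k v w))
      = ∑ u, ∑ v ∈ G.neighborFinset u, Real.log (xc' G k u v) := by
    rw [adj_sum_swap]
    apply Finset.sum_congr rfl
    intro v _
    rw [← Finset.mul_sum, sum_nbr_erase]
    rw [← mul_assoc, inv_mul_cancel₀, one_mul]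
    have : (2:ℝ) ≤ (G.degree v : ℝ) := by exact_mod_cast h2 v
    linarith
  rw [← hB, ← Finset.sum_add_distrib]
  apply Finset.sum_congr rfl
  intro u _
  rw [← Finset.sum_add_distrib]



lemma count_lower2 (h2 : ∀ v : V, 2 ≤ G.degree v) (hne : Nonempty V) (k : ℕ) :
    (∑ v, (G.degree v : ℝ))
        * (((∑ v, (G.degree v : ℝ)) / (Fintype.card V : ℝ)) - 1) ^ k
      ≤ ∑ u, ∑ v ∈ G.neighborFinset u, (xc' G k u v : ℝ) := by
  set M : ℝ := ∑ v, (G.degree v : ℝ) with hM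
  set n : ℝ := (Fintype.card V : ℝ) with hn
  have hnpos : 0 < n := by
    rw [hn]; exact_mod_cast Fintype.card_pos
  have hM2n : 2 * n ≤ M := by
    rw [hM, hn]
    have : ∑ _v : V, (2:ℝ) ≤ ∑ v, (G.degree v : ℝ) := by
      apply Finset.sum_le_sum
      intro v _
      exact_mod_cast h2 v
    simpa [Finset.sum_const, nsmul_eq_mul, mul_comm] using this
  have hMpos : 0 < M := by linarith
  set μ : ℝ := M / n - 1 with hμ
  have hμ1 : 1 ≤ μ := by
    rw [hμ]
    have : 2 ≤ M / n := by
      rw [le_div_iff₀ hnpos]; linarith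
    linarith
  have hμpos : 0 < μ := by linarith
  -- Jensen: M * log μ ≤ Λ
  have hΛswap : (∑ u, ∑ v ∈ G.neighborFinset u, Real.log ((G.degree v : ℝ) - 1))
      = ∑ v, (G.degree v : ℝ) * Real.log ((G.degree v : ℝ) - 1) := by
    rw [adj_sum_swap]
    apply Finset.sum_congr rfl
    intro v _
    rw [Finset.sum_const, card_neighborFinset_eq_degree, nsmul_eq_mul]
  have hjensen : M * Real.log μ
      ≤ ∑ u, ∑ v ∈ G.neighborFinset u, Real.log ((G.degree v : ℝ) - 1) := by
    have := jensen_deg' (Finset.univ : Finset V) Finset.univ_nonempty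
      (fun v => (G.degree v : ℝ) - 1)
      (fun v _ => by
        show (1:ℝ) ≤ (G.degree v : ℝ) - 1
        have : (2:ℝ) ≤ (G.degree v : ℝ) := by exact_mod_cast h2 v
        linarith)
    rw [hΛswap]
    have e1 : ∑ v, (((G.degree v : ℝ) - 1) + 1) = M := by
      rw [hM]; apply Finset.sum_congr rfl; intro v _; ring
    have e2 : (∑ v, ((G.degree v : ℝ) - 1)) = M - n := by
      rw [hM, hn, Finset.sum_sub_distrib, Finset.sum_const, nsmul_eq_mul, mul_one,
        Finset.card_univ]
    have e3 : (M - n) / (Finset.univ : Finset V).card = μ := by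
      rw [hμ, Finset.card_univ, ← hn]
      field_simp
    rw [e1, e2, e3] at this
    refine le_trans this (le_of_eq ?_)
    apply Finset.sum_congr rfl; intro v _
    ring_nf
  -- L lower bound by induction
  have hL : ∀ j : ℕ, (j : ℝ) * (M * Real.log μ)
      ≤ ∑ u, ∑ v ∈ G.neighborFinset u, Real.log (xc' G j u v) := by
    intro j
    induction j with
    | zero => simp [xc'_zero]
    | succ j ih =>
      have := Lstep G h2 j
      push_cast
      nlinarith [this, ih, hjensen]
  -- AM-GM over all directed edges
  set s : Finset ((_ : V) × V) := Finset.univ.sigma (fun u => G.neighborFinset u) with hs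
  have hcards : (s.card : ℝ) = M := by
    rw [hs, Finset.card_sigma, hM]
    push_cast
    apply Finset.sum_congr rfl
    intro u _
    rw [card_neighborFinset_eq_degree]
  have hsne : s.Nonempty := by
    rw [← Finset.card_pos]
    have : (0:ℝ) < (s.card : ℝ) := by rw [hcards]; exact hMpos
    exact_mod_cast this
  have hpos : ∀ p ∈ s, (0:ℝ) < (xc' G k p.1 p.2 : ℝ) := by
    intro p hp
    rw [hs, Finset.mem_sigma] at hp
    have := one_le_xc' G h2 k p.1 p.2 ((mem_neighborFinset G p.1 p.2).1 hp.2)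
    exact_mod_cast lt_of_lt_of_le zero_lt_one (by exact_mod_cast this)
  have key := sum_log_le_card_mul_log' s hsne (fun p => (xc' G k p.1 p.2 : ℝ)) hpos
  set N : ℝ := ∑ u, ∑ v ∈ G.neighborFinset u, (xc' G k u v : ℝ) with hN
  have hsum_eq : ∑ p ∈ s, (xc' G k p.1 p.2 : ℝ) = N := by
    rw [hs, hN, Finset.sum_sigma]
  have hlog_eq : ∑ p ∈ s, Real.log (xc' G k p.1 p.2 : ℝ)
      = ∑ u, ∑ v ∈ G.neighborFinset u, Real.log (xc' G k u v) := by
    rw [hs, Finset.sum_sigma]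
  rw [hsum_eq, hlog_eq, hcards] at key
  have hNM : M ≤ N := by
    rw [hN, hM]
    calc ∑ v, (G.degree v : ℝ) = ∑ u, ∑ _v ∈ G.neighborFinset u, (1:ℝ) := by
          apply Finset.sum_congr rfl
          intro u _
          rw [Finset.sum_const, card_neighborFinset_eq_degree, nsmul_eq_mul, mul_one]
      _ ≤ ∑ u, ∑ v ∈ G.neighborFinset u, (xc' G k u v : ℝ) := by
          apply Finset.sum_le_sum
          intro u _
          apply Finset.sum_le_sum
          intro v hv
          exact_mod_cast one_le_xc' G h2 k u v ((mem_neighborFinset G u v).1 hv)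
  have hNpos : 0 < N := lt_of_lt_of_le hMpos hNM
  -- combine
  have h1 : (k:ℝ) * Real.log μ ≤ Real.log (N / M) := by
    have h := le_trans (hL k) key
    rw [mul_left_comm] at h
    exact le_of_mul_le_mul_left h hMpos
  have h2' : μ ^ k ≤ N / M := by
    have := Real.exp_le_exp.2 h1
    rw [Real.exp_log (div_pos hNpos hMpos)] at this
    calc μ ^ k = Real.exp (Real.log μ) ^ k := by rw [Real.exp_log hμpos]
      _ = Real.exp ((k:ℝ) * Real.log μ) := by rw [← Real.exp_nat_mul]
      _ ≤ N / M := this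
  calc M * μ ^ k ≤ M * (N / M) := by
        apply mul_le_mul_of_nonneg_left h2' hMpos.le
    _ = N := by field_simp


lemma nbs'_eq_filter (k : ℕ) (a z : V) :
    nbs' G k a z a = (G.finsetWalkLength k a z).filter (fun p => p.edges.Chain' (· ≠ ·)) := by
  rw [nbs']
  apply Finset.filter_congr
  intro p _
  constructor
  · exact fun h => h.1
  · intro h
    refine ⟨h, ?_⟩
    intro hcon
    have hmem : s(a, a) ∈ p.edges := by
      have := List.mem_of_mem_head? (l := p.edges) (by rw [hcon]; rfl)
      exact this
    have := SimpleGraph.Walk.edges_subset_edgeSet p hmem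
    rw [SimpleGraph.mem_edgeSet] at this
    exact G.loopless.irrefl a this

lemma sum_nbs'_zero (a u : V) : ∑ z, (nbs' G 0 a z u).card = 1 := by
  rw [Finset.sum_eq_single a]
  · have : nbs' G 0 a a u = {SimpleGraph.Walk.nil} := by
      ext p
      rw [mem_nbs']
      constructor
      · intro ⟨hlen, _, _⟩
        cases p with
        | nil => simp
        | cons h t => simp at hlen
      · intro hp
        simp only [Finset.mem_singleton] at hp
        subst hp
        refine ⟨rfl, List.isChain_nil, by simp⟩
    rw [this, Finset.card_singleton]
  · intro z _ hz
    rw [Finset.card_eq_zero]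
    ext p
    rw [mem_nbs']
    simp only [Finset.notMem_empty, iff_false]
    intro ⟨hlen, _, _⟩
    exact hz (SimpleGraph.Walk.eq_of_length_eq_zero hlen).symm
  · intro h
    exact absurd (Finset.mem_univ a) h

lemma sum_card_nbs' : ∀ (k : ℕ) (u v : V), ∑ z, (nbs' G k v z u).card = xc' G k u v := by
  intro k
  induction k with
  | zero => intro u v; rw [sum_nbs'_zero, xc'_zero]
  | succ k ih =>
    intro u v
    calc ∑ z, (nbs' G (k+1) v z u).card
        = ∑ z, ∑ w ∈ (G.neighborFinset v).erase u, (nbs' G k w z v).card := by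
          apply Finset.sum_congr rfl
          intro z _
          exact nbs'_succ_card G k v z u
      _ = ∑ w ∈ (G.neighborFinset v).erase u, ∑ z, (nbs' G k w z v).card := Finset.sum_comm
      _ = ∑ w ∈ (G.neighborFinset v).erase u, xc' G k v w := by
          apply Finset.sum_congr rfl
          intro w _
          exact ih v w
      _ = xc' G (k+1) u v := (xc'_succ G k u v).symm

end GraphCount

theorem alon_hoory_linial_odd_girth {V : Type*} [Fintype V] (G : SimpleGraph V)
    [DecidableRel G.Adj] (r : ℕ) (hmin : 2 ≤ G.minDegree) (hg : G.girth = 2 * r + 1)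
    (d : ℝ) (hd : d = 2 * (G.edgeFinset.card : ℝ) / (Fintype.card V : ℝ)) :
    (Fintype.card V : ℝ) ≥ 1 + d * ∑ i ∈ Finset.range r, (d - 1) ^ i := by
  classical
  -- girth consequences
  have hnacyc : ¬ G.IsAcyclic := by
    intro h
    rw [h.girth_eq_zero] at hg
    omega
  have hr1 : 1 ≤ r := by
    have := G.three_le_girth hnacyc
    omega
  have hne : Nonempty V := by
    obtain ⟨a, _, _, _⟩ := (SimpleGraph.exists_girth_eq_length (G := G)).2 hnacyc
    exact ⟨a⟩
  have hegirth_ne_top : G.egirth ≠ ⊤ := by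
    intro h
    rw [SimpleGraph.girth, h] at hg
    simp at hg
  have hegirth : G.egirth = ((2 * r + 1 : ℕ) : ℕ∞) := by
    rw [← ENat.coe_toNat hegirth_ne_top]
    exact congrArg Nat.cast hg
  have hcyclen : ∀ (u : V) (c : G.Walk u u), c.IsCycle → 2 * r + 1 ≤ c.length := by
    intro u c hc
    have := SimpleGraph.le_egirth.1 (le_of_eq hegirth.symm) u c hc
    exact_mod_cast this
  -- degrees
  have h2 : ∀ v : V, 2 ≤ G.degree v := fun v => le_trans hmin (G.minDegree_le_degree v)
  have hnpos : 0 < Fintype.card V := Fintype.card_pos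
  have hsumdeg : ∑ v, G.degree v = 2 * G.edgeFinset.card :=
    SimpleGraph.sum_degrees_eq_twice_card_edges G
  set n : ℝ := (Fintype.card V : ℝ) with hn
  have hnR : (0:ℝ) < n := by rw [hn]; exact_mod_cast hnpos
  set M : ℝ := ∑ v, (G.degree v : ℝ) with hM
  have hM2m : M = 2 * (G.edgeFinset.card : ℝ) := by
    rw [hM, ← Nat.cast_sum, hsumdeg]
    push_cast
    ring
  have hMdn : M = d * n := by
    rw [hM2m, hd]
    field_simp
  have hμd : M / n - 1 = d - 1 := by
    rw [hMdn]
    field_simp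
  -- walk counts
  set Nw : ℕ → ℕ := fun k => ∑ a, ∑ z,
    ((G.finsetWalkLength k a z).filter (fun p => p.edges.Chain' (· ≠ ·))).card with hNw
  -- upper bound
  have hupper : ∑ k ∈ Finset.range (r+1), (Nw k : ℝ) ≤ n * n := by
    have hnat : ∑ k ∈ Finset.range (r+1), Nw k ≤ Fintype.card V * Fintype.card V := by
      rw [hNw]
      calc ∑ k ∈ Finset.range (r+1), ∑ a, ∑ z,
            ((G.finsetWalkLength k a z).filter (fun p => p.edges.Chain' (· ≠ ·))).card
          = ∑ a, ∑ z, ∑ k ∈ Finset.range (r+1),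
            ((G.finsetWalkLength k a z).filter (fun p => p.edges.Chain' (· ≠ ·))).card := by
            rw [Finset.sum_comm]
            apply Finset.sum_congr rfl
            intro a _
            rw [Finset.sum_comm]
        _ ≤ ∑ _a : V, ∑ _z : V, 1 := by
            apply Finset.sum_le_sum
            intro a _
            apply Finset.sum_le_sum
            intro z _
            exact sum_nb_card_le_one r hcyclen a z
        _ = Fintype.card V * Fintype.card V := by
            simp [Finset.sum_const, Finset.card_univ, mul_comm]
    calc ∑ k ∈ Finset.range (r+1), (Nw k : ℝ)
        = ((∑ k ∈ Finset.range (r+1), Nw k : ℕ) : ℝ) := by push_cast [hNw]; rfl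
      _ ≤ ((Fintype.card V * Fintype.card V : ℕ) : ℝ) := by exact_mod_cast hnat
      _ = n * n := by rw [hn]; push_cast; ring
  -- Nw 0
  have hNw0 : (Nw 0 : ℝ) = n := by
    rw [hNw]
    have : ∀ a : V, ∑ z, ((G.finsetWalkLength 0 a z).filter
        (fun p => p.edges.Chain' (· ≠ ·))).card = 1 := by
      intro a
      calc ∑ z, ((G.finsetWalkLength 0 a z).filter (fun p => p.edges.Chain' (· ≠ ·))).card
          = ∑ z, (nbs' G 0 a z a).card := by
            apply Finset.sum_congr rfl
            intro z _
            rw [nbs'_eq_filter]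
        _ = 1 := sum_nbs'_zero G a a
    simp only [this, Finset.sum_const, Finset.card_univ, smul_eq_mul, mul_one]
    rfl
  -- Nw (k+1)
  have hNwsucc : ∀ k : ℕ, M * (d-1)^k ≤ (Nw (k+1) : ℝ) := by
    intro k
    have heq : Nw (k+1) = ∑ a, ∑ w ∈ G.neighborFinset a, xc' G k a w := by
      rw [hNw]
      apply Finset.sum_congr rfl
      intro a _
      calc ∑ z, ((G.finsetWalkLength (k+1) a z).filter
            (fun p => p.edges.Chain' (· ≠ ·))).card
          = ∑ z, (nbs' G (k+1) a z a).card := by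
            apply Finset.sum_congr rfl
            intro z _
            rw [nbs'_eq_filter]
        _ = ∑ z, ∑ w ∈ (G.neighborFinset a).erase a, (nbs' G k w z a).card := by
            apply Finset.sum_congr rfl
            intro z _
            exact nbs'_succ_card G k a z a
        _ = ∑ w ∈ (G.neighborFinset a).erase a, ∑ z, (nbs' G k w z a).card :=
            Finset.sum_comm
        _ = ∑ w ∈ (G.neighborFinset a).erase a, xc' G k a w := by
            apply Finset.sum_congr rfl
            intro w _
            exact sum_card_nbs' G k a w
        _ = ∑ w ∈ G.neighborFinset a, xc' G k a w := by
            rw [Finset.erase_eq_of_notMem (G.notMem_neighborFinset_self a)]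
    have hcast : (Nw (k+1) : ℝ) = ∑ a, ∑ w ∈ G.neighborFinset a, (xc' G k a w : ℝ) := by
      rw [heq]
      push_cast
      ring
    rw [hcast]
    have := count_lower2 G h2 hne k
    rw [← hM, ← hn] at this
    rw [hμd] at this
    exact this
  -- combine
  have hsplit : ∑ k ∈ Finset.range (r+1), (Nw k : ℝ)
      = (∑ k ∈ Finset.range r, (Nw (k+1) : ℝ)) + (Nw 0 : ℝ) :=
    Finset.sum_range_succ' _ r
  have hlower : n + M * ∑ i ∈ Finset.range r, (d-1)^i
      ≤ ∑ k ∈ Finset.range (r+1), (Nw k : ℝ) := by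
    rw [hsplit, hNw0, Finset.mul_sum]
    have : ∑ i ∈ Finset.range r, M * (d-1)^i ≤ ∑ k ∈ Finset.range r, (Nw (k+1) : ℝ) :=
      Finset.sum_le_sum (fun i _ => hNwsucc i)
    linarith
  have hfinal : n * (1 + d * ∑ i ∈ Finset.range r, (d-1)^i) ≤ n * n := by
    have h := le_trans hlower hupper
    rw [hMdn] at h
    nlinarith [h]
  have := le_of_mul_le_mul_left hfinal hnR
  exact this
end

section
/- Let G be a simple graph with minimum degree at least 2 and average degree d̄. If a random vertex v is chosen with probability π(v) = d_v/(2|E(G)|), then for every i ≥ 1 the expected number of non-returning walks of i edges starting at v satisfies E[n_i(v)] ≥ d̄(d̄-1)^{i-1}. -/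
variable {V : Type*}

open Finset

namespace NRProof

/-- evaluate a walk at a natural number time (clamped). -/
def ev {n : ℕ} (w : Fin (n + 1) → V) (t : ℕ) : V := w ⟨min t n, by omega⟩

lemma ev_eq {n : ℕ} (w : Fin (n + 1) → V) {t : ℕ} (h : t ≤ n) :
    ev w t = w ⟨t, by omega⟩ := by
  unfold ev
  congr 1
  exact Fin.ext (by simp [Nat.min_eq_left h])

lemma ev_snoc_le {n : ℕ} (w : Fin (n + 1) → V) (u : V) {t : ℕ} (h : t ≤ n) :
    ev (Fin.snoc w u) t = ev w t := by
  rw [ev_eq _ (by omega : t ≤ n + 1), ev_eq _ h]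
  have : (⟨t, by omega⟩ : Fin (n + 2)) = Fin.castSucc ⟨t, by omega⟩ := by
    exact Fin.ext (by simp)
  rw [this, Fin.snoc_castSucc]

lemma ev_snoc_last {n : ℕ} (w : Fin (n + 1) → V) (u : V) :
    ev (Fin.snoc w u) (n + 1) = u := by
  rw [ev_eq _ (le_refl (n+1))]
  have : (⟨n + 1, by omega⟩ : Fin (n + 2)) = Fin.last (n + 1) := rfl
  rw [this, Fin.snoc_last]

lemma isNR_iff (G : SimpleGraph V) (i : ℕ) (w : Fin (i + 1) → V) :
    IsNR G i w ↔ (∀ j : ℕ, j < i → G.Adj (ev w j) (ev w (j + 1))) ∧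
      (∀ j : ℕ, j + 2 ≤ i → ev w j ≠ ev w (j + 2)) := by
  unfold IsNR
  constructor
  · rintro ⟨h1, h2⟩
    refine ⟨fun j hj => ?_, fun j hj => ?_⟩
    · rw [ev_eq _ (by omega), ev_eq _ (by omega)]; exact h1 j hj
    · rw [ev_eq _ (by omega), ev_eq _ (by omega)]; exact h2 j hj
  · rintro ⟨h1, h2⟩
    refine ⟨fun j hj => ?_, fun j hj => ?_⟩
    · have := h1 j hj; rwa [ev_eq _ (by omega), ev_eq _ (by omega)] at this
    · have := h2 j hj; rwa [ev_eq _ (by omega), ev_eq _ (by omega)] at this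

lemma isNR_snoc (G : SimpleGraph V) (k : ℕ) (w : Fin (k + 2) → V) (u : V) :
    IsNR G (k + 2) (Fin.snoc w u) ↔
      IsNR G (k + 1) w ∧ G.Adj (ev w (k + 1)) u ∧ ev w k ≠ u := by
  rw [isNR_iff, isNR_iff]
  constructor
  · rintro ⟨h1, h2⟩
    refine ⟨⟨fun j hj => ?_, fun j hj => ?_⟩, ?_, ?_⟩
    · have := h1 j (by omega)
      rwa [ev_snoc_le _ _ (by omega), ev_snoc_le _ _ (by omega)] at this
    · have := h2 j (by omega)
      rwa [ev_snoc_le _ _ (by omega), ev_snoc_le _ _ (by omega)] at this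
    · have := h1 (k + 1) (by omega)
      rwa [ev_snoc_le _ _ (by omega), ev_snoc_last] at this
    · have := h2 k (by omega)
      rwa [ev_snoc_le _ _ (by omega), ev_snoc_last] at this
  · rintro ⟨⟨h1, h2⟩, h3, h4⟩
    refine ⟨fun j hj => ?_, fun j hj => ?_⟩
    · rcases Nat.lt_or_ge j (k + 1) with h | h
      · rw [ev_snoc_le _ _ (by omega), ev_snoc_le _ _ (by omega)]
        exact h1 j h
      · have hj' : j = k + 1 := by omega
        subst hj'
        rw [ev_snoc_le _ _ (by omega), ev_snoc_last]
        exact h3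
    · rcases Nat.lt_or_ge j k with h | h
      · rw [ev_snoc_le _ _ (by omega), ev_snoc_le _ _ (by omega)]
        exact h2 j (by omega)
      · have hj' : j = k := by omega
        subst hj'
        rw [ev_snoc_le _ _ (by omega), ev_snoc_last]
        exact h4

end NRProof


section B
open Finset
namespace NRProof
open scoped Classical

variable [Fintype V]

noncomputable def Wk (G : SimpleGraph V) (i : ℕ) : Finset (Fin (i + 1) → V) :=
  Finset.univ.filter (fun w => IsNR G i w)

lemma mem_Wk {G : SimpleGraph V} {i : ℕ} {w : Fin (i + 1) → V} :
    w ∈ Wk G i ↔ IsNR G i w := by simp [Wk]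

variable (G : SimpleGraph V) [DecidableRel G.Adj] [DecidableEq V]

/-- Decomposition of walks of `k+2` edges by their last vertex. -/
lemma sum_Wk_succ (k : ℕ) (F : (Fin (k + 3) → V) → ℝ) :
    ∑ w ∈ Wk G (k + 2), F w =
      ∑ w ∈ Wk G (k + 1), ∑ u ∈ G.neighborFinset (ev w (k + 1)) \ {ev w k},
        F (Fin.snoc w u) := by
  rw [← Finset.sum_sigma (Wk G (k+1)) (fun w => G.neighborFinset (ev w (k + 1)) \ {ev w k})
    (fun p => F (Fin.snoc p.1 p.2))]
  refine Finset.sum_nbij' (fun w => ⟨Fin.init w, w (Fin.last (k + 2))⟩)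
    (fun p => Fin.snoc p.1 p.2) ?_ ?_ ?_ ?_ ?_
  · intro w hw
    rw [mem_Wk] at hw
    have hw' : IsNR G (k + 2) (Fin.snoc (Fin.init w) (w (Fin.last (k+2)))) := by
      rwa [Fin.snoc_init_self]
    rw [isNR_snoc] at hw'
    obtain ⟨h1, h2, h3⟩ := hw'
    simp only [Finset.mem_sigma, mem_Wk, Finset.mem_sdiff, SimpleGraph.mem_neighborFinset,
      Finset.mem_singleton]
    exact ⟨h1, h2, fun hc => h3 hc.symm⟩
  · rintro ⟨w, u⟩ hp
    simp only [Finset.mem_sigma, mem_Wk, Finset.mem_sdiff, SimpleGraph.mem_neighborFinset,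
      Finset.mem_singleton] at hp
    rw [mem_Wk, isNR_snoc]
    exact ⟨hp.1, hp.2.1, fun hc => hp.2.2 hc.symm⟩
  · intro w _; exact Fin.snoc_init_self w
  · rintro ⟨w, u⟩ _
    simp only [Fin.init_snoc, Fin.snoc_last]
  · intro w _
    simp only [Fin.snoc_init_self]

end NRProof
end B


section C
open Finset
namespace NRProof
open scoped Classical

variable [Fintype V] (G : SimpleGraph V) [DecidableRel G.Adj] [DecidableEq V]

lemma isNR_one (w : Fin 2 → V) : IsNR G 1 w ↔ G.Adj (w 0) (w 1) := by
  unfold IsNR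
  constructor
  · rintro ⟨h1, -⟩; exact h1 0 (by omega)
  · intro h
    refine ⟨fun j hj => ?_, fun j hj => by omega⟩
    have hj0 : j = 0 := by omega
    subst hj0; exact h

lemma sum_Wk_one (F : (Fin 2 → V) → ℝ) :
    ∑ w ∈ Wk G 1, F w = ∑ a : V, ∑ b ∈ G.neighborFinset a, F ![a, b] := by
  rw [← Finset.sum_sigma (Finset.univ : Finset V) (fun a => G.neighborFinset a)
    (fun p => F ![p.1, p.2])]
  refine Finset.sum_nbij' (fun w => ⟨w 0, w 1⟩) (fun p => ![p.1, p.2]) ?_ ?_ ?_ ?_ ?_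
  · intro w hw
    rw [mem_Wk, isNR_one] at hw
    simp only [Finset.mem_sigma, Finset.mem_univ, SimpleGraph.mem_neighborFinset, true_and]
    exact hw
  · rintro ⟨a, b⟩ hp
    simp only [Finset.mem_sigma, Finset.mem_univ, SimpleGraph.mem_neighborFinset, true_and] at hp
    rw [mem_Wk, isNR_one]
    simpa using hp
  · intro w _
    funext j
    fin_cases j <;> simp
  · rintro ⟨a, b⟩ _
    simp
  · intro w _
    congr 1
    funext j
    fin_cases j <;> simp

noncomputable def mu (i : ℕ) (w : Fin (i + 1) → V) : ℝ :=
  ∏ t ∈ Finset.Ico 1 i, ((G.degree (ev w t) : ℝ) - 1)⁻¹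

lemma mu_one (w : Fin 2 → V) : mu G 1 w = 1 := by simp [mu]

lemma mu_snoc (k : ℕ) (w : Fin (k + 2) → V) (u : V) :
    mu G (k + 2) (Fin.snoc w u) =
      mu G (k + 1) w * ((G.degree (ev w (k + 1)) : ℝ) - 1)⁻¹ := by
  unfold mu
  rw [Finset.prod_Ico_succ_top (by omega : 1 ≤ k + 1)]
  congr 1
  · refine Finset.prod_congr rfl fun t ht => ?_
    rw [Finset.mem_Ico] at ht
    rw [ev_snoc_le _ _ (by omega)]
  · rw [ev_snoc_le _ _ (le_refl (k + 1))]

lemma swap_adj_sum (h : V → V → ℝ) :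
    ∑ a : V, ∑ b ∈ G.neighborFinset a, h a b
      = ∑ b : V, ∑ a ∈ G.neighborFinset b, h a b := by
  simp only [SimpleGraph.neighborFinset_eq_filter, Finset.sum_filter]
  rw [Finset.sum_comm]
  refine Finset.sum_congr rfl fun b _ => Finset.sum_congr rfl fun a _ => ?_
  exact if_congr (G.adj_comm a b) rfl rfl

lemma marginal (hdeg : ∀ v : V, 2 ≤ G.degree v) :
    ∀ i t : ℕ, t + 1 ≤ i + 1 → ∀ g : V → V → ℝ,
    ∑ w ∈ Wk G (i + 1), mu G (i + 1) w * g (ev w t) (ev w (t + 1)) =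
      ∑ a : V, ∑ b ∈ G.neighborFinset a, g a b := by
  intro i
  induction i with
  | zero =>
    intro t ht g
    have ht0 : t = 0 := by omega
    subst ht0
    rw [sum_Wk_one G (fun w => mu G 1 w * g (ev w 0) (ev w 1))]
    refine Finset.sum_congr rfl fun a _ => Finset.sum_congr rfl fun b hb => ?_
    rw [mu_one, one_mul, ev_eq _ (by omega), ev_eq _ (by omega)]
    rfl
  | succ k ih =>
    intro t ht g
    rw [sum_Wk_succ]
    rcases Nat.lt_or_ge (t + 1) (k + 2) with hcase | hcase
    · -- interior edge: the inner sum collapses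
      have key : ∀ w ∈ Wk G (k + 1),
          (∑ u ∈ G.neighborFinset (ev w (k + 1)) \ {ev w k},
            mu G (k + 2) (Fin.snoc w u) *
              g (ev (Fin.snoc w u) t) (ev (Fin.snoc w u) (t + 1)))
          = mu G (k + 1) w * g (ev w t) (ev w (t + 1)) := by
        intro w hw
        have hadj : ev w k ∈ G.neighborFinset (ev w (k + 1)) := by
          rw [mem_Wk, isNR_iff] at hw
          rw [SimpleGraph.mem_neighborFinset]
          exact (hw.1 k (by omega)).symm
        have hcard : ((G.neighborFinset (ev w (k + 1)) \ {ev w k}).card : ℝ)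
            = (G.degree (ev w (k + 1)) : ℝ) - 1 := by
          rw [Finset.card_sdiff_of_subset (Finset.singleton_subset_iff.mpr hadj)]
          rw [Finset.card_singleton]
          have : 1 ≤ (G.neighborFinset (ev w (k + 1))).card := Finset.card_pos.mpr ⟨_, hadj⟩
          push_cast [Nat.cast_sub this]
          rw [SimpleGraph.card_neighborFinset_eq_degree]
        have hne : (G.degree (ev w (k + 1)) : ℝ) - 1 ≠ 0 := by
          have := hdeg (ev w (k + 1)); intro hc
          have : (G.degree (ev w (k + 1)) : ℝ) = 1 := by linarith
          norm_cast at this; omega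
        have term : ∀ u ∈ G.neighborFinset (ev w (k + 1)) \ {ev w k},
            mu G (k + 2) (Fin.snoc w u) *
              g (ev (Fin.snoc w u) t) (ev (Fin.snoc w u) (t + 1))
            = (mu G (k + 1) w * ((G.degree (ev w (k + 1)) : ℝ) - 1)⁻¹) *
                g (ev w t) (ev w (t + 1)) := by
          intro u hu
          rw [mu_snoc, ev_snoc_le _ _ (by omega), ev_snoc_le _ _ (by omega)]
        rw [Finset.sum_congr rfl term, Finset.sum_const, nsmul_eq_mul, hcard]
        linear_combination (mu G (k + 1) w * g (ev w t) (ev w (t + 1))) * mul_inv_cancel₀ hne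
      rw [Finset.sum_congr rfl key]
      exact ih t (by omega) g
    · -- last edge
      have ht' : t = k + 1 := by omega
      subst ht'
      set g' : V → V → ℝ := fun p q =>
        ∑ u ∈ G.neighborFinset q \ {p}, ((G.degree q : ℝ) - 1)⁻¹ * g q u with hg'
      have key : ∀ w ∈ Wk G (k + 1),
          (∑ u ∈ G.neighborFinset (ev w (k + 1)) \ {ev w k},
            mu G (k + 2) (Fin.snoc w u) *
              g (ev (Fin.snoc w u) (k + 1)) (ev (Fin.snoc w u) (k + 1 + 1)))
          = mu G (k + 1) w * g' (ev w k) (ev w (k + 1)) := by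
        intro w hw
        rw [hg', Finset.mul_sum, Finset.sum_congr rfl (fun u hu => ?_)]
        rw [mu_snoc, ev_snoc_le _ _ (by omega), ev_snoc_last]
        ring
      rw [Finset.sum_congr rfl key, ih k (by omega) g']
      -- now the counting identity
      rw [swap_adj_sum]
      refine Finset.sum_congr rfl fun b _ => ?_
      have hne : (G.degree b : ℝ) - 1 ≠ 0 := by
        have := hdeg b; intro hc
        have : (G.degree b : ℝ) = 1 := by linarith
        norm_cast at this; omega
      rw [hg']
      have step : ∀ a ∈ G.neighborFinset b,
          (∑ u ∈ G.neighborFinset b \ {a}, ((G.degree b : ℝ) - 1)⁻¹ * g b u)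
          = (∑ u ∈ G.neighborFinset b, ((G.degree b : ℝ) - 1)⁻¹ * g b u)
            - ((G.degree b : ℝ) - 1)⁻¹ * g b a := by
        intro a ha
        rw [Finset.sum_sdiff_eq_sub (Finset.singleton_subset_iff.mpr ha),
          Finset.sum_singleton]
      rw [Finset.sum_congr rfl step, Finset.sum_sub_distrib, Finset.sum_const,
        nsmul_eq_mul, SimpleGraph.card_neighborFinset_eq_degree]
      simp only [← Finset.mul_sum]
      linear_combination (∑ u ∈ G.neighborFinset b, g b u) * mul_inv_cancel₀ hne

end NRProof
end C


section D
open Finset Real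
namespace NRProof

lemma convex_xlog {c : ℝ} (hc0 : 0 ≤ c) (hc1 : c ≤ 1) :
    ConvexOn ℝ (Set.Ici 2) (fun x : ℝ => x * Real.log (x - c)) := by
  have hint : interior (Set.Ici (2:ℝ)) = Set.Ioi 2 := interior_Ici
  refine convexOn_of_hasDerivWithinAt2_nonneg (f' := fun x => Real.log (x - c) + x / (x - c))
    (f'' := fun x => 1 / (x - c) - c / (x - c) ^ 2) (convex_Ici 2) ?_ ?_ ?_ ?_
  · refine ContinuousOn.mul continuousOn_id (ContinuousOn.log ?_ ?_)
    · exact (continuous_id.sub continuous_const).continuousOn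
    · intro x hx
      simp only [Set.mem_Ici] at hx
      intro hzero
      have : x - c ≥ 1 := by linarith
      linarith
  · intro x hx
    rw [hint] at hx
    simp only [Set.mem_Ioi] at hx
    have hne : x - c ≠ 0 := by intro h; nlinarith
    have h1 : HasDerivAt (fun y : ℝ => y - c) 1 x := (hasDerivAt_id x).sub_const c
    have h2 : HasDerivAt (fun y : ℝ => Real.log (y - c)) (1 / (x - c)) x := h1.log hne
    have h3 := (hasDerivAt_id x).mul h2
    have : HasDerivAt (fun y : ℝ => y * Real.log (y - c))
        (Real.log (x - c) + x / (x - c)) x := by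
      convert h3 using 1 <;> try rfl
      simp only [id_eq]
      ring
    exact this.hasDerivWithinAt
  · intro x hx
    rw [hint] at hx
    simp only [Set.mem_Ioi] at hx
    have hne : x - c ≠ 0 := by intro h; nlinarith
    have h1 : HasDerivAt (fun y : ℝ => y - c) 1 x := (hasDerivAt_id x).sub_const c
    have h2 : HasDerivAt (fun y : ℝ => Real.log (y - c)) (1 / (x - c)) x := h1.log hne
    have h4 : HasDerivAt (fun y : ℝ => y / (y - c))
        ((1 * (x - c) - x * 1) / (x - c) ^ 2) x := (hasDerivAt_id x).div h1 hne
    have : HasDerivAt (fun y : ℝ => Real.log (y - c) + y / (y - c))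
        (1 / (x - c) - c / (x - c) ^ 2) x := by
      convert h2.add h4 using 1 <;> try rfl
      field_simp
      ring
    exact this.hasDerivWithinAt
  · intro x hx
    rw [hint] at hx
    simp only [Set.mem_Ioi] at hx
    have hpos : 0 < x - c := by linarith
    have : 1 / (x - c) - c / (x - c) ^ 2 = (x - 2 * c) / (x - c) ^ 2 := by
      field_simp
      ring
    show (0:ℝ) ≤ 1 / (x - c) - c / (x - c) ^ 2
    rw [this]
    apply div_nonneg (by linarith) (by positivity)

lemma jensen_deg {V : Type*} [Fintype V] (G : SimpleGraph V) [DecidableRel G.Adj]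
    (hdeg : ∀ v : V, 2 ≤ G.degree v) (hV : 0 < Fintype.card V)
    {c : ℝ} (hc0 : 0 ≤ c) (hc1 : c ≤ 1) :
    (∑ v : V, (G.degree v : ℝ)) *
        Real.log ((∑ v : V, (G.degree v : ℝ)) / (Fintype.card V : ℝ) - c) ≤
      ∑ v : V, (G.degree v : ℝ) * Real.log ((G.degree v : ℝ) - c) := by
  set n : ℝ := (Fintype.card V : ℝ) with hn
  have hn0 : 0 < n := by rw [hn]; exact_mod_cast hV
  have key := (convex_xlog hc0 hc1).map_sum_le (t := Finset.univ)
    (w := fun _ : V => 1 / n) (p := fun v => (G.degree v : ℝ))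
    (fun _ _ => by positivity)
    (by rw [Finset.sum_const, nsmul_eq_mul]; field_simp; simp [hn])
    (fun v _ => by
      simp only [Set.mem_Ici]
      exact_mod_cast hdeg v)
  simp only [smul_eq_mul] at key
  have hl : ∑ v : V, 1 / n * (G.degree v : ℝ) = (∑ v : V, (G.degree v : ℝ)) / n := by
    rw [← Finset.mul_sum]; ring
  rw [hl] at key
  have hr : ∑ v : V, 1 / n * ((G.degree v : ℝ) * Real.log ((G.degree v : ℝ) - c))
      = (1 / n) * ∑ v : V, (G.degree v : ℝ) * Real.log ((G.degree v : ℝ) - c) := by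
    rw [← Finset.mul_sum]
  rw [hr] at key
  have := mul_le_mul_of_nonneg_left key (le_of_lt hn0)
  calc (∑ v : V, (G.degree v : ℝ)) * Real.log ((∑ v : V, (G.degree v : ℝ)) / n - c)
      = n * ((∑ v : V, (G.degree v : ℝ)) / n * Real.log ((∑ v : V, (G.degree v : ℝ)) / n - c)) := by
        field_simp
    _ ≤ n * (1 / n * ∑ v : V, (G.degree v : ℝ) * Real.log ((G.degree v : ℝ) - c)) := this
    _ = ∑ v : V, (G.degree v : ℝ) * Real.log ((G.degree v : ℝ) - c) := by field_simp

end NRProof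
end D


open Finset Real NRProof in
theorem expected_nonreturning_walks_from_random_vertex {V : Type*} [Fintype V]
    (G : SimpleGraph V) [DecidableRel G.Adj] (hmin : 2 ≤ G.minDegree)
    (d : ℝ) (hd : d = 2 * (G.edgeFinset.card : ℝ) / (Fintype.card V : ℝ))
    (i : ℕ) (hi : 1 ≤ i) :
    ∑ v : V, (G.degree v : ℝ) / (2 * (G.edgeFinset.card : ℝ)) * (nV G i v : ℝ) ≥
      d * (d - 1) ^ (i - 1) := by
  classical
  rcases isEmpty_or_nonempty V with hV | hV
  · have hc : (Fintype.card V : ℝ) = 0 := by simp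
    rw [hd, hc, div_zero]
    simp [Finset.univ_eq_empty]
  · obtain ⟨k, rfl⟩ : ∃ k, i = k + 1 := ⟨i - 1, by omega⟩
    have hdeg : ∀ v : V, 2 ≤ G.degree v := fun v => le_trans hmin (G.minDegree_le_degree v)
    have hcard : 0 < Fintype.card V := Fintype.card_pos
    have hncast : (0:ℝ) < (Fintype.card V : ℝ) := by exact_mod_cast hcard
    set M : ℝ := (G.edgeFinset.card : ℝ) with hM
    have hsumdeg : ∑ v : V, (G.degree v : ℝ) = 2 * M := by
      rw [hM]
      exact_mod_cast G.sum_degrees_eq_twice_card_edges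
    have hdcast : ∀ v : V, (2:ℝ) ≤ (G.degree v : ℝ) := fun v => by exact_mod_cast hdeg v
    have hsum_ge : 2 * (Fintype.card V : ℝ) ≤ 2 * M := by
      rw [← hsumdeg]
      calc 2 * (Fintype.card V : ℝ) = ∑ _v : V, (2:ℝ) := by
            rw [Finset.sum_const, nsmul_eq_mul, Finset.card_univ]; ring
        _ ≤ ∑ v : V, (G.degree v : ℝ) := Finset.sum_le_sum fun v _ => hdcast v
    have h2M : (0:ℝ) < 2 * M := by linarith
    have hd2 : 2 ≤ d := by
      rw [hd, le_div_iff₀ hncast]; linarith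
    have hdpos : ∀ v : V, (0:ℝ) < (G.degree v : ℝ) - 1 := fun v => by
      have := hdcast v; linarith
    -- Step A : rewrite the LHS as a sum over walks
    have hnV : ∀ v : V, (nV G (k+1) v : ℝ)
        = (((Wk G (k+1)).filter (fun w => w 0 = v)).card : ℝ) := by
      intro v
      congr 1
      rw [nV, Nat.card_eq_fintype_card, Fintype.card_subtype]
      congr 1
      ext w
      simp only [Finset.mem_filter, Finset.mem_univ, true_and, mem_Wk]
    have stepA : ∑ v : V, (G.degree v : ℝ) / (2*M) * (nV G (k+1) v : ℝ)
        = ∑ w ∈ Wk G (k+1), (G.degree (w 0) : ℝ) / (2*M) := by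
      rw [← Finset.sum_fiberwise (Wk G (k+1)) (fun w => w 0)
        (fun w => (G.degree (w 0) : ℝ) / (2*M))]
      refine Finset.sum_congr rfl fun v _ => ?_
      have hfib : ∀ w ∈ (Wk G (k+1)).filter (fun w => w 0 = v),
          (G.degree (w 0):ℝ)/(2*M) = (G.degree v:ℝ)/(2*M) := fun w hw => by
        rw [(Finset.mem_filter.mp hw).2]
      rw [Finset.sum_congr rfl hfib, Finset.sum_const, nsmul_eq_mul, hnV]
      ring
    -- basic facts about mu and X
    have h01 : ∀ w : Fin (k+2) → V, ev w 0 = w 0 := fun w => by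
      rw [ev_eq _ (by omega)]
      congr 1
    set X : (Fin (k+2) → V) → ℝ := fun w =>
      (G.degree (w 0) : ℝ) * ∏ t ∈ Finset.Ico 1 (k+1), ((G.degree (ev w t) : ℝ) - 1)
      with hX
    have hXpos : ∀ w, 0 < X w := fun w =>
      mul_pos (by have := hdcast (w 0); linarith)
        (Finset.prod_pos fun t _ => hdpos _)
    have hmunn : ∀ w, 0 ≤ mu G (k+1) w := fun w =>
      Finset.prod_nonneg fun t _ => inv_nonneg.2 (le_of_lt (hdpos _))
    have hmuX : ∀ w, mu G (k+1) w * X w = (G.degree (w 0) : ℝ) := by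
      intro w
      rw [hX, mu]
      rw [show ∀ a b c : ℝ, a * (b * c) = b * (a * c) from fun a b c => by ring]
      rw [← Finset.prod_mul_distrib]
      rw [Finset.prod_congr rfl fun t _ => inv_mul_cancel₀ (ne_of_gt (hdpos (ev w t)))]
      simp
    have hpsum : ∑ w ∈ Wk G (k+1), mu G (k+1) w = 2 * M := by
      have hmar := marginal G hdeg k 0 (by omega) (fun _ _ => (1:ℝ))
      simp only [mul_one] at hmar
      rw [hmar]
      rw [Finset.sum_congr rfl (fun a _ => by
        rw [Finset.sum_const, nsmul_eq_mul, mul_one, SimpleGraph.card_neighborFinset_eq_degree])]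
      exact hsumdeg
    -- AM-GM
    have amgm := Real.geom_mean_le_arith_mean_weighted (Wk G (k+1))
      (fun w => mu G (k+1) w / (2*M)) X
      (fun w _ => div_nonneg (hmunn w) (le_of_lt h2M))
      (by rw [← Finset.sum_div, hpsum]; field_simp; exact div_self (by linarith))
      (fun w _ => le_of_lt (hXpos w))
    have hrhs : ∑ w ∈ Wk G (k+1), (mu G (k+1) w / (2*M)) * X w
        = ∑ w ∈ Wk G (k+1), (G.degree (w 0) : ℝ) / (2*M) := by
      refine Finset.sum_congr rfl fun w _ => ?_
      rw [div_mul_eq_mul_div, hmuX w]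
    -- lower bound the geometric mean
    have hgm : ∏ w ∈ Wk G (k+1), X w ^ (mu G (k+1) w / (2*M))
        = Real.exp (∑ w ∈ Wk G (k+1), (mu G (k+1) w / (2*M)) * Real.log (X w)) := by
      rw [Real.exp_sum]
      refine Finset.prod_congr rfl fun w _ => ?_
      rw [Real.rpow_def_of_pos (hXpos w), mul_comm]
    -- compute the sum of logs
    have hlogX : ∀ w, Real.log (X w) = Real.log (G.degree (w 0) : ℝ)
        + ∑ t ∈ Finset.Ico 1 (k+1), Real.log ((G.degree (ev w t) : ℝ) - 1) := by
      intro w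
      rw [hX]
      rw [Real.log_mul (by have := hdcast (w 0); positivity)
        (ne_of_gt (Finset.prod_pos fun t _ => hdpos _))]
      rw [Real.log_prod fun t _ => ne_of_gt (hdpos _)]
    set A : ℝ := ∑ a : V, (G.degree a : ℝ) * Real.log (G.degree a : ℝ) with hA
    set B : ℝ := ∑ a : V, (G.degree a : ℝ) * Real.log ((G.degree a : ℝ) - 1) with hB
    have hsumlog : ∑ w ∈ Wk G (k+1), mu G (k+1) w * Real.log (X w) = A + k * B := by
      rw [Finset.sum_congr rfl fun w _ => by rw [hlogX w, mul_add, Finset.mul_sum]]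
      rw [Finset.sum_add_distrib]
      congr 1
      · -- first vertex marginal
        have hmar := marginal G hdeg k 0 (by omega)
          (fun a _ => Real.log (G.degree a : ℝ))
        rw [Finset.sum_congr rfl (fun w _ => by rw [← h01 w])]
        rw [hmar, hA]
        refine Finset.sum_congr rfl fun a _ => ?_
        rw [Finset.sum_const, nsmul_eq_mul, SimpleGraph.card_neighborFinset_eq_degree]
      · -- interior marginals
        rw [Finset.sum_comm]
        have hinner : ∀ t ∈ Finset.Ico 1 (k+1),
            ∑ w ∈ Wk G (k+1), mu G (k+1) w * Real.log ((G.degree (ev w t) : ℝ) - 1) = B := by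
          intro t ht
          rw [Finset.mem_Ico] at ht
          have hmar := marginal G hdeg k t (by omega)
            (fun a _ => Real.log ((G.degree a : ℝ) - 1))
          rw [hmar, hB]
          refine Finset.sum_congr rfl fun a _ => ?_
          rw [Finset.sum_const, nsmul_eq_mul, SimpleGraph.card_neighborFinset_eq_degree]
        rw [Finset.sum_congr rfl hinner, Finset.sum_const, nsmul_eq_mul, Nat.card_Ico]
        simp
    -- Jensen on the vertex sums
    have hjA : 2 * M * Real.log d ≤ A := by
      have := jensen_deg G hdeg hcard (c := 0) le_rfl zero_le_one
      rw [hsumdeg, sub_zero, ← hd] at this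
      simpa [hA, sub_zero] using this
    have hjB : 2 * M * Real.log (d - 1) ≤ B := by
      have := jensen_deg G hdeg hcard (c := 1) zero_le_one le_rfl
      rw [hsumdeg] at this
      have hdm : 2 * M / (Fintype.card V : ℝ) - 1 = d - 1 := by rw [hd]
      rw [hdm] at this
      simpa [hB] using this
    -- put everything together
    have hT : Real.log d + k * Real.log (d - 1)
        ≤ ∑ w ∈ Wk G (k+1), (mu G (k+1) w / (2*M)) * Real.log (X w) := by
      have : ∑ w ∈ Wk G (k+1), (mu G (k+1) w / (2*M)) * Real.log (X w)
          = (A + k * B) / (2 * M) := by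
        rw [← hsumlog]
        rw [Finset.sum_congr rfl (fun w _ => div_mul_eq_mul_div _ _ _), ← Finset.sum_div]
      rw [this, le_div_iff₀ h2M]
      have hkB : (k:ℝ) * (2 * M * Real.log (d - 1)) ≤ k * B :=
        mul_le_mul_of_nonneg_left hjB (by positivity)
      nlinarith [hjA]
    have hexp : d * (d - 1) ^ k
        ≤ Real.exp (∑ w ∈ Wk G (k+1), (mu G (k+1) w / (2*M)) * Real.log (X w)) := by
      calc d * (d - 1) ^ k
          = Real.exp (Real.log d + k * Real.log (d - 1)) := by
            rw [Real.exp_add, Real.exp_nat_mul, Real.exp_log (by linarith : (0:ℝ) < d),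
              Real.exp_log (by linarith : (0:ℝ) < d - 1)]
        _ ≤ _ := Real.exp_le_exp.mpr hT
    have final : d * (d - 1) ^ k ≤ ∑ v : V, (G.degree v : ℝ) / (2*M) * (nV G (k+1) v : ℝ) := by
      rw [stepA, ← hrhs]
      calc d * (d - 1) ^ k ≤ _ := hexp
        _ = ∏ w ∈ Wk G (k+1), X w ^ (mu G (k+1) w / (2*M)) := hgm.symm
        _ ≤ _ := amgm
    simpa using final
end

section
/- Let G = (V_L, V_R, E) be a bipartite graph of girth g = 2r, and let e = {u,v} be an edge with u ∈ V_L, v ∈ V_R. Then n_L ≥ ∑_{i=0}^{⌊(r-2)/2⌋} n_{2i+1}(u→v) + ∑_{i=0}^{⌈(r-2)/2⌉} n_{2i}(v→u), where n_j(e⃗) counts non-returning walks of j+1 edges starting with the directed edge e⃗. -/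
variable {V : Type*}

private def toWalk (G : SimpleGraph V) : (n : ℕ) → (g : ℕ → V) →
    (∀ j < n, G.Adj (g j) (g (j+1))) → G.Walk (g 0) (g n)
  | 0, _, _ => SimpleGraph.Walk.nil
  | n+1, g, h => SimpleGraph.Walk.cons (h 0 (by omega))
      (toWalk G n (fun s => g (s+1)) (fun j hj => h (j+1) (by omega)))

private lemma length_toWalk (G : SimpleGraph V) : ∀ (n : ℕ) (g : ℕ → V)
    (h : ∀ j < n, G.Adj (g j) (g (j+1))), (toWalk G n g h).length = n
  | 0, _, _ => rfl
  | n+1, g, h => by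
    simp [toWalk, length_toWalk G n]

private lemma support_toWalk (G : SimpleGraph V) : ∀ (n : ℕ) (g : ℕ → V)
    (h : ∀ j < n, G.Adj (g j) (g (j+1))),
    (toWalk G n g h).support = (List.range (n+1)).map g
  | 0, g, _ => by simp [toWalk, List.range_succ]
  | n+1, g, h => by
    rw [toWalk, SimpleGraph.Walk.support_cons, support_toWalk G n]
    conv_rhs => rw [List.range_succ_eq_map]
    rw [List.map_cons, List.map_map]
    rfl

private lemma edges_toWalk (G : SimpleGraph V) : ∀ (n : ℕ) (g : ℕ → V)
    (h : ∀ j < n, G.Adj (g j) (g (j+1))),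
    (toWalk G n g h).edges = (List.range n).map (fun j => s(g j, g (j+1)))
  | 0, g, _ => by simp [toWalk]
  | n+1, g, h => by
    rw [toWalk, SimpleGraph.Walk.edges_cons, edges_toWalk G n]
    conv_rhs => rw [List.range_succ_eq_map]
    rw [List.map_cons, List.map_map]
    rfl

private lemma exists_cycle_of_fn (G : SimpleGraph V) (n : ℕ) (g : ℕ → V) (hn : 2 ≤ n)
    (hadj : ∀ j < n, G.Adj (g j) (g (j+1)))
    (hinj : ∀ a ≤ n, ∀ b ≤ n, g a = g b → a = b)
    (hcl : G.Adj (g n) (g 0)) :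
    ∃ (a : V) (w : G.Walk a a), w.IsCycle ∧ w.length ≤ n + 1 := by
  refine ⟨g n, SimpleGraph.Walk.cons hcl (toWalk G n g hadj), ?_, ?_⟩
  · rw [SimpleGraph.Walk.cons_isCycle_iff]
    refine ⟨?_, ?_⟩
    · rw [SimpleGraph.Walk.isPath_def, support_toWalk]
      refine List.Nodup.map_on ?_ List.nodup_range
      intro a ha b hb hab
      exact hinj a (by exact Nat.le_of_lt_succ (List.mem_range.mp ha)) b (by exact Nat.le_of_lt_succ (List.mem_range.mp hb)) hab
    · rw [edges_toWalk]
      intro hmem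
      obtain ⟨j, hj, hje⟩ := List.mem_map.mp hmem
      rw [List.mem_range] at hj
      rw [Sym2.eq_iff] at hje
      rcases hje with ⟨h1, h2⟩ | ⟨h1, h2⟩
      · exact absurd (hinj j (by omega) n le_rfl h1) (by omega)
      · have e1 : j = n := by
          have := hinj j (by omega) 0 (by omega) h1
          have := hinj (j+1) (by omega) n le_rfl h2
          omega
        omega
  · rw [SimpleGraph.Walk.length_cons, length_toWalk]

private lemma exists_cycle_of_repeat (G : SimpleGraph V) (n : ℕ) (x : ℕ → V)
    (hadj : ∀ j < n, G.Adj (x j) (x (j+1)))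
    (hNR : ∀ j, j + 2 ≤ n → x j ≠ x (j+2))
    (i j : ℕ) (hij : i < j) (hjn : j ≤ n) (heq : x i = x j) :
    ∃ (a : V) (w : G.Walk a a), w.IsCycle ∧ w.length ≤ n := by
  classical
  have hP : ∃ d, 0 < d ∧ ∃ i0, i0 + d ≤ n ∧ x i0 = x (i0 + d) :=
    ⟨j - i, by omega, i, by omega, by rw [show i + (j-i) = j by omega]; exact heq⟩
  set d := Nat.find hP with hd
  obtain ⟨hd0, i0, hdn, hdeq⟩ := Nat.find_spec hP
  have hdle : d ≤ j - i := Nat.find_le ⟨by omega, i, by omega,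
    by rw [show i + (j-i) = j by omega]; exact heq⟩
  have hd3 : 3 ≤ d := by
    rcases (by omega : d = 1 ∨ d = 2 ∨ 3 ≤ d) with h1 | h2 | h3
    · exfalso
      have := hadj i0 (by omega)
      rw [show i0 + 1 = i0 + d by omega, ← hdeq] at this
      exact G.loopless.irrefl _ this
    · exact absurd (by rw [show i0 + 2 = i0 + d by omega]; exact hdeq) (hNR i0 (by omega))
    · exact h3
  obtain ⟨a, w, hw, hl⟩ := exists_cycle_of_fn G (d-1) (fun s => x (i0 + s)) (by omega)
    (fun j hj => hadj (i0 + j) (by omega))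
    (by
      intro a ha b hb hab
      by_contra hne
      rcases Nat.lt_or_ge a b with h | h
      · exact Nat.find_min hP (m := b - a) (by omega)
          ⟨by omega, i0 + a, by omega, by rw [show i0 + a + (b - a) = i0 + b by omega]; exact hab⟩
      · exact Nat.find_min hP (m := a - b) (by omega)
          ⟨by omega, i0 + b, by omega, by rw [show i0 + b + (a - b) = i0 + a by omega]; exact hab.symm⟩)
    (by
      have h := hadj (i0 + (d-1)) (by omega)
      rw [show i0 + (d-1) + 1 = i0 + d by omega, ← hdeq] at h
      exact h)
  exact ⟨a, w, hw, by omega⟩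

private lemma exists_cycle_of_two_paths (G : SimpleGraph V) (m k : ℕ) (x y : ℕ → V)
    (hxadj : ∀ j < m, G.Adj (x j) (x (j+1)))
    (hyadj : ∀ j < k, G.Adj (y j) (y (j+1)))
    (hxinj : ∀ a ≤ m, ∀ b ≤ m, x a = x b → a = b)
    (hyinj : ∀ a ≤ k, ∀ b ≤ k, y a = y b → a = b)
    (h0 : x 0 = y 0) (hend : x m = y k)
    (hne : ¬ (m = k ∧ ∀ s ≤ m, x s = y s)) :
    ∃ (a : V) (w : G.Walk a a), w.IsCycle ∧ w.length ≤ m + k := by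
  classical
  have hdiv : ∃ s, s ≤ m ∧ s ≤ k ∧ x s ≠ y s := by
    by_contra h
    push_neg at h
    rcases Nat.le_total m k with hmk | hkm
    · have h1 : y m = y k := by rw [← h m le_rfl hmk]; exact hend
      have h2 : m = k := hyinj m (by omega) k le_rfl h1
      exact hne ⟨h2, fun s hs => h s hs (by omega)⟩
    · have h1 : x k = x m := by rw [h k hkm le_rfl]; exact hend.symm
      have h2 : k = m := hxinj k (by omega) m le_rfl h1
      exact hne ⟨h2.symm, fun s hs => h s hs (by omega)⟩
  set s0 := Nat.find hdiv with hs0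
  obtain ⟨hs0m, hs0k, hs0ne⟩ := Nat.find_spec hdiv
  rw [← hs0] at hs0m hs0k hs0ne
  have hs0min : ∀ t < s0, x t = y t := by
    intro t ht
    by_contra hc
    exact Nat.find_min hdiv ht ⟨by omega, by omega, hc⟩
  have hs01 : 1 ≤ s0 := by
    rcases Nat.eq_zero_or_pos s0 with h | h
    · exact absurd (h ▸ h0) (h ▸ hs0ne)
    · omega
  set a := s0 - 1 with ha
  have hxa : x a = y a := hs0min a (by omega)
  have haxy : x (a+1) ≠ y (a+1) := by rw [show a + 1 = s0 by omega]; exact hs0ne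
  have ham : a + 1 ≤ m := by omega
  have hak : a + 1 ≤ k := by omega
  have hQ : ∃ s, a < s ∧ s ≤ m ∧ ∃ t, a < t ∧ t ≤ k ∧ x s = y t :=
    ⟨m, by omega, le_rfl, k, by omega, le_rfl, hend⟩
  set b := Nat.find hQ with hb
  obtain ⟨hab, hbm, t, hat, htk, hbt⟩ := Nat.find_spec hQ
  rw [← hb] at hab hbm hbt
  have hbmin : ∀ s, a < s → s < b → ∀ t', a < t' → t' ≤ k → x s ≠ y t' := by
    intro s h1 h2 t' h3 h4 hc
    exact Nat.find_min hQ h2 ⟨h1, by omega, t', h3, h4, hc⟩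
  set p := b - a with hp
  set q := t - a - 1 with hq
  set n := p + q with hn
  set g : ℕ → V := fun s => if s ≤ p then x (a + s) else y (t - (s - p)) with hgdef
  have hg1 : ∀ s, s ≤ p → g s = x (a + s) := by intro s hs; simp [hgdef, hs]
  have hg2 : ∀ s, p < s → g s = y (t - (s - p)) := by
    intro s hs; simp [hgdef, Nat.not_le.mpr hs]
  have hn2 : 2 ≤ n := by
    by_contra h
    have hb1 : b = a + 1 := by omega
    have ht1 : t = a + 1 := by omega
    apply haxy
    calc x (a+1) = x b := by rw [hb1]
      _ = y t := hbt
      _ = y (a+1) := by rw [ht1]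
  have hgadj : ∀ j < n, G.Adj (g j) (g (j+1)) := by
    intro j hj
    rcases Nat.lt_or_ge j p with h1 | h1
    · rw [hg1 j (by omega), hg1 (j+1) (by omega)]
      exact hxadj (a + j) (by omega)
    rcases Nat.eq_or_lt_of_le h1 with h2 | h2
    · -- j = p
      have hq1 : 1 ≤ q := by omega
      rw [hg1 j (by omega), hg2 (j+1) (by omega)]
      rw [show a + j = b by omega, hbt, show j + 1 - p = 1 by omega]
      have h := (hyadj (t-1) (by omega)).symm
      rw [show t - 1 + 1 = t by omega] at h
      exact h
    · -- j > p
      rw [hg2 j h2, hg2 (j+1) (by omega)]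
      have h := (hyadj (t - (j + 1 - p)) (by omega)).symm
      rw [show t - (j + 1 - p) + 1 = t - (j - p) by omega] at h
      exact h
  have hginj : ∀ a' ≤ n, ∀ b' ≤ n, g a' = g b' → a' = b' := by
    have key : ∀ a' ≤ p, ∀ b' ≤ n, p < b' → g a' ≠ g b' := by
      intro a' ha' b' hb' hpb' hc
      rw [hg1 a' ha', hg2 b' hpb'] at hc
      set t' := t - (b' - p) with ht'
      have ht'1 : a + 1 ≤ t' := by omega
      have ht'2 : t' ≤ t - 1 := by omega
      rcases (by omega : a' = 0 ∨ a' = p ∨ (0 < a' ∧ a' < p)) with h | h | h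
      · subst h
        have : a = t' := hyinj a (by omega) t' (by omega) (by rw [← hxa]; exact hc)
        omega
      · subst h
        have : t = t' := hyinj t (by omega) t' (by omega) (by rw [← hbt, ← show a + p = b by omega]; exact hc)
        omega
      · exact hbmin (a + a') (by omega) (by omega) t' (by omega) (by omega) hc
    intro a' ha' b' hb' heq
    rcases le_or_gt a' p with h1 | h1 <;> rcases le_or_gt b' p with h2 | h2
    · rw [hg1 a' h1, hg1 b' h2] at heq
      have := hxinj (a + a') (by omega) (a + b') (by omega) heq
      omega
    · exact absurd heq (key a' h1 b' hb' h2)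
    · exact absurd heq.symm (key b' h2 a' ha' h1)
    · rw [hg2 a' h1, hg2 b' h2] at heq
      have := hyinj (t - (a' - p)) (by omega) (t - (b' - p)) (by omega) heq
      omega
  have hgn : g n = y (a + 1) := by
    rcases Nat.eq_zero_or_pos q with h | h
    · rw [hg1 n (by omega), show a + n = b by omega, hbt, show t = a + 1 by omega]
    · rw [hg2 n (by omega), show t - (n - p) = a + 1 by omega]
  have hgcl : G.Adj (g n) (g 0) := by
    rw [hgn, hg1 0 (by omega), show a + 0 = a from rfl, hxa]
    exact (hyadj a (by omega)).symm
  obtain ⟨c, w, hw, hl⟩ := exists_cycle_of_fn G n g hn2 hgadj hginj hgcl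
  exact ⟨c, w, hw, by omega⟩

private lemma nr_to_fun {G : SimpleGraph V} {n : ℕ} {w : Fin (n+1) → V} (h : IsNR G n w)
    (hcyc : ∀ (a : V) (c : G.Walk a a), c.IsCycle → ¬ c.length ≤ n) :
    ∃ x : ℕ → V, (∀ s (hs : s ≤ n), x s = w ⟨s, by omega⟩) ∧
      (∀ j < n, G.Adj (x j) (x (j+1))) ∧
      (∀ a ≤ n, ∀ b ≤ n, x a = x b → a = b) := by
  refine ⟨fun s => w ⟨min s n, by omega⟩, ?_, ?_, ?_⟩
  · intro s hs
    simp [Nat.min_eq_left hs]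
  · intro j hj
    have h1 : min j n = j := Nat.min_eq_left (by omega)
    have h2 : min (j+1) n = j + 1 := Nat.min_eq_left (by omega)
    simp only [h1, h2]
    exact h.1 j hj
  · intro a ha b hb hab
    simp only [Nat.min_eq_left ha, Nat.min_eq_left hb] at hab
    by_contra hne
    have hne' : (⟨a, by omega⟩ : Fin (n+1)) ≠ ⟨b, by omega⟩ := by
      simp [Fin.ext_iff]; omega
    -- derive a cycle from the repeat
    rcases Nat.lt_or_ge a b with hlt | hge
    · obtain ⟨c, cw, hcw, hlen⟩ := exists_cycle_of_repeat G n
        (fun s => w ⟨min s n, by omega⟩)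
        (by intro j hj
            have h1 : min j n = j := Nat.min_eq_left (by omega)
            have h2 : min (j+1) n = j + 1 := Nat.min_eq_left (by omega)
            simp only [h1, h2]; exact h.1 j hj)
        (by intro j hj
            have h1 : min j n = j := Nat.min_eq_left (by omega)
            have h2 : min (j+2) n = j + 2 := Nat.min_eq_left (by omega)
            simp only [h1, h2]; exact h.2 j hj)
        a b hlt hb
        (by simp only [Nat.min_eq_left ha, Nat.min_eq_left hb]; exact hab)
      exact hcyc c cw hcw hlen
    · have hlt : b < a := by omega
      obtain ⟨c, cw, hcw, hlen⟩ := exists_cycle_of_repeat G n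
        (fun s => w ⟨min s n, by omega⟩)
        (by intro j hj
            have h1 : min j n = j := Nat.min_eq_left (by omega)
            have h2 : min (j+1) n = j + 1 := Nat.min_eq_left (by omega)
            simp only [h1, h2]; exact h.1 j hj)
        (by intro j hj
            have h1 : min j n = j := Nat.min_eq_left (by omega)
            have h2 : min (j+2) n = j + 2 := Nat.min_eq_left (by omega)
            simp only [h1, h2]; exact h.2 j hj)
        b a hlt ha
        (by simp only [Nat.min_eq_left ha, Nat.min_eq_left hb]; exact hab.symm)
      exact hcyc c cw hcw hlen

private lemma walk_side {G : SimpleGraph V} {A B : Finset V}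
    (hpart : ∀ v : V, (v ∈ A ∧ v ∉ B) ∨ (v ∈ B ∧ v ∉ A))
    (hbip : ∀ u v : V, G.Adj u v → (u ∈ A ∧ v ∈ B) ∨ (u ∈ B ∧ v ∈ A))
    {n : ℕ} {w : Fin (n+1) → V}
    (hadj : ∀ j : ℕ, ∀ _h : j < n, G.Adj (w ⟨j, by omega⟩) (w ⟨j + 1, by omega⟩))
    (h0 : w 0 ∈ A) :
    ∀ j (hj : j ≤ n), (j % 2 = 0 → w ⟨j, by omega⟩ ∈ A) ∧ (j % 2 = 1 → w ⟨j, by omega⟩ ∈ B) := by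
  intro j
  induction j with
  | zero => intro _; exact ⟨fun _ => h0, by omega⟩
  | succ j ih =>
    intro hj
    have step := hadj j (by omega)
    obtain ⟨ihA, ihB⟩ := ih (by omega)
    constructor
    · intro hpar
      have hwB : w ⟨j, by omega⟩ ∈ B := ihB (by omega)
      rcases hbip _ _ step with ⟨h1, h2⟩ | ⟨h1, h2⟩
      · rcases hpart (w ⟨j, by omega⟩) with ⟨_, hnb⟩ | _
        · exact absurd hwB hnb
        · exact absurd h1 (by tauto)
      · exact h2
    · intro hpar
      have hwA : w ⟨j, by omega⟩ ∈ A := ihA (by omega)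
      rcases hbip _ _ step with ⟨h1, h2⟩ | ⟨h1, h2⟩
      · exact h2
      · rcases hpart (w ⟨j, by omega⟩) with ⟨_, hnb⟩ | ⟨_, hna⟩
        · exact absurd h1 hnb
        · exact absurd hwA hna

private lemma nat_card_sigma {ι : Type*} [Fintype ι] (f : ι → Type*) [∀ i, Finite (f i)] :
    Nat.card (Σ i, f i) = ∑ i, Nat.card (f i) := by
  classical
  haveI : ∀ i, Fintype (f i) := fun i => Fintype.ofFinite _
  simp [Nat.card_eq_fintype_card, Fintype.card_sigma]

private lemma fin_congr {N : ℕ} (w : Fin N → V) (a b : ℕ) (ha : a < N) (hb : b < N)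
    (h : a = b) : w ⟨a, ha⟩ = w ⟨b, hb⟩ := by subst h; rfl

private lemma fin_mk_zero' {n : ℕ} (h : 0 < n + 1) : (⟨0, h⟩ : Fin (n+1)) = 0 := rfl

private lemma fin_mk_one' {n : ℕ} (h : 1 < n + 2) : (⟨1, h⟩ : Fin (n+2)) = 1 := by
  apply Fin.ext
  simp

theorem bipartite_walk_count_bound {V : Type*} [Fintype V] [DecidableEq V]
    (G : SimpleGraph V) (L R : Finset V)
    (hpart : ∀ v : V, (v ∈ L ∧ v ∉ R) ∨ (v ∈ R ∧ v ∉ L))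
    (hbip : ∀ u v : V, G.Adj u v → (u ∈ L ∧ v ∈ R) ∨ (u ∈ R ∧ v ∈ L))
    (r : ℕ) (hg : G.girth = 2 * r) (u v : V) (hu : u ∈ L) (hv : v ∈ R)
    (huv : G.Adj u v) :
    L.card ≥ ∑ i ∈ Finset.range ((r - 2) / 2 + 1), nE G (2 * i + 1) u v +
      ∑ i ∈ Finset.range ((r - 1) / 2 + 1), nE G (2 * i) v u := by
  classical
  have hlow : ∀ c : ℕ, (∃ (a : V) (w : G.Walk a a), w.IsCycle ∧ w.length ≤ c) →
      2 * r ≤ c ∧ 2 ≤ r := by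
    rintro c ⟨a, w, hw, hl⟩
    have hna : ¬ G.IsAcyclic := fun h => h w hw
    have h3 : 3 ≤ G.girth := SimpleGraph.three_le_girth hna
    have hle : G.egirth ≤ (w.length : ℕ∞) := (SimpleGraph.le_egirth.mp le_rfl) a w hw
    have hgl : G.girth ≤ w.length := by
      have h2 := ENat.toNat_le_toNat hle (by simp)
      simpa [SimpleGraph.girth] using h2
    rw [hg] at h3 hgl
    exact ⟨by omega, by omega⟩
  -- walk families
  set A := (r - 2) / 2 + 1 with hA
  set B := (r - 1) / 2 + 1 with hB
  have endA : ∀ (i : ℕ) (w : Fin (2*i+1+2) → V),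
      (IsNR G (2*i+1+1) w ∧ w 0 = u ∧ w 1 = v) → w ⟨2*i+2, by omega⟩ ∈ L := by
    intro i w hw
    have hside := walk_side hpart hbip hw.1.1 (by rw [hw.2.1]; exact hu) (2*i+2) (by omega)
    exact hside.1 (by omega)
  have endB : ∀ (i : ℕ) (w : Fin (2*i+2) → V),
      (IsNR G (2*i+1) w ∧ w 0 = v ∧ w 1 = u) → w ⟨2*i+1, by omega⟩ ∈ L := by
    intro i w hw
    have hside := walk_side (fun x => (hpart x).symm) (fun a b hab => (hbip a b hab).symm)
      hw.1.1 (by rw [hw.2.1]; exact hv) (2*i+1) (by omega)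
    exact hside.2 (by omega)
  have hinj : Function.Injective
      (Sum.elim
        (fun p : Σ i : Fin A, {w : Fin (2*(i:ℕ)+1+2) → V //
            IsNR G (2*(i:ℕ)+1+1) w ∧ w 0 = u ∧ w 1 = v} =>
          (⟨p.2.1 ⟨2*(p.1:ℕ)+2, by omega⟩, endA p.1 p.2.1 p.2.2⟩ : {a : V // a ∈ L}))
        (fun p : Σ i : Fin B, {w : Fin (2*(i:ℕ)+2) → V //
            IsNR G (2*(i:ℕ)+1) w ∧ w 0 = v ∧ w 1 = u} =>
          (⟨p.2.1 ⟨2*(p.1:ℕ)+1, by omega⟩, endB p.1 p.2.1 p.2.2⟩ : {a : V // a ∈ L}))) := by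
    rintro (⟨i, w1, hw1⟩ | ⟨i, w1, hw1⟩) (⟨j, w2, hw2⟩ | ⟨j, w2, hw2⟩) hF <;>
      simp only [Sum.elim_inl, Sum.elim_inr, Subtype.mk.injEq] at hF
    -- bounds on indices
    · -- case A A
      have hib : (i : ℕ) ≤ (r-2)/2 := by have := i.2; omega
      have hjb : (j : ℕ) ≤ (r-2)/2 := by have := j.2; omega
      obtain ⟨x, hxw, hxadj, hxinj⟩ := nr_to_fun hw1.1
        (fun a c hc hl => by have := hlow _ ⟨a, c, hc, hl⟩; omega)
      obtain ⟨y, hyw, hyadj, hyinj⟩ := nr_to_fun hw2.1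
        (fun a c hc hl => by have := hlow _ ⟨a, c, hc, hl⟩; omega)
      by_contra hne
      have hne' : ¬ (2*(i:ℕ)+1 = 2*(j:ℕ)+1 ∧
          ∀ s ≤ 2*(i:ℕ)+1, x (1+s) = y (1+s)) := by
        rintro ⟨hmk, hall⟩
        apply hne
        have hij : (i : ℕ) = (j : ℕ) := by omega
        have hij' : i = j := Fin.ext hij
        subst hij'
        have hw12 : w1 = w2 := by
          funext s
          rcases s with ⟨sv, hs⟩
          rcases Nat.eq_zero_or_pos sv with h0' | h0'
          · subst h0'
            rw [fin_mk_zero', hw1.2.1, hw2.2.1]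
          · have h1 := hall (sv-1) (by omega)
            rw [hxw _ (by omega), hyw _ (by omega)] at h1
            calc w1 ⟨sv, hs⟩ = w1 ⟨1+(sv-1), by omega⟩ := fin_congr w1 _ _ _ _ (by omega)
              _ = w2 ⟨1+(sv-1), by omega⟩ := h1
              _ = w2 ⟨sv, hs⟩ := fin_congr w2 _ _ _ _ (by omega)
        subst hw12
        rfl
      obtain ⟨c, cw, hcw, hlen⟩ := exists_cycle_of_two_paths G (2*(i:ℕ)+1) (2*(j:ℕ)+1)
        (fun s => x (1+s)) (fun s => y (1+s))
        (fun jj hjj => hxadj (1+jj) (by omega))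
        (fun jj hjj => hyadj (1+jj) (by omega))
        (fun a ha b hb hab => by have := hxinj (1+a) (by omega) (1+b) (by omega) hab; omega)
        (fun a ha b hb hab => by have := hyinj (1+a) (by omega) (1+b) (by omega) hab; omega)
        (by
          show x 1 = y 1
          rw [hxw 1 (by omega), hyw 1 (by omega), fin_mk_one', fin_mk_one',
            hw1.2.2, hw2.2.2])
        (by
          show x (1+(2*(i:ℕ)+1)) = y (1+(2*(j:ℕ)+1))
          rw [hxw _ (by omega), hyw _ (by omega)]
          calc w1 ⟨1+(2*(i:ℕ)+1), by omega⟩ = w1 ⟨2*(i:ℕ)+2, by omega⟩ :=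
                fin_congr w1 _ _ _ _ (by omega)
            _ = w2 ⟨2*(j:ℕ)+2, by omega⟩ := hF
            _ = w2 ⟨1+(2*(j:ℕ)+1), by omega⟩ := fin_congr w2 _ _ _ _ (by omega))
        hne'
      have := hlow _ ⟨c, cw, hcw, hlen⟩
      omega
    · -- case A B : impossible
      exfalso
      have hib : (i : ℕ) ≤ (r-2)/2 := by have := i.2; omega
      have hjb : (j : ℕ) ≤ (r-1)/2 := by have := j.2; omega
      obtain ⟨x, hxw, hxadj, hxinj⟩ := nr_to_fun hw1.1
        (fun a c hc hl => by have := hlow _ ⟨a, c, hc, hl⟩; omega)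
      obtain ⟨y, hyw, hyadj, hyinj⟩ := nr_to_fun hw2.1
        (fun a c hc hl => by have := hlow _ ⟨a, c, hc, hl⟩; omega)
      have hne' : ¬ (2*(i:ℕ)+1+1 = 2*(j:ℕ) ∧
          ∀ s ≤ 2*(i:ℕ)+1+1, x s = y (1+s)) := by
        rintro ⟨hmk, hall⟩
        have h1 := hall 1 (by omega)
        rw [hxw 1 (by omega), hyw (1+1) (by omega)] at h1
        rw [fin_mk_one', hw1.2.2] at h1
        have h2 := hw2.1.2 0 (by omega)
        rw [fin_mk_zero', hw2.2.1] at h2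
        exact h2 (by rw [← h1])
      obtain ⟨c, cw, hcw, hlen⟩ := exists_cycle_of_two_paths G (2*(i:ℕ)+1+1) (2*(j:ℕ))
        x (fun s => y (1+s))
        hxadj
        (fun jj hjj => hyadj (1+jj) (by omega))
        hxinj
        (fun a ha b hb hab => by have := hyinj (1+a) (by omega) (1+b) (by omega) hab; omega)
        (by
          show x 0 = y 1
          rw [hxw 0 (by omega), hyw 1 (by omega), fin_mk_zero', fin_mk_one',
            hw1.2.1, hw2.2.2])
        (by
          show x (2*(i:ℕ)+1+1) = y (1+2*(j:ℕ))
          rw [hxw _ (by omega), hyw _ (by omega)]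
          calc w1 ⟨2*(i:ℕ)+1+1, by omega⟩ = w1 ⟨2*(i:ℕ)+2, by omega⟩ :=
                fin_congr w1 _ _ _ _ (by omega)
            _ = w2 ⟨2*(j:ℕ)+1, by omega⟩ := hF
            _ = w2 ⟨1+2*(j:ℕ), by omega⟩ := fin_congr w2 _ _ _ _ (by omega))
        hne'
      have := hlow _ ⟨c, cw, hcw, hlen⟩
      omega
    · -- case B A : impossible
      exfalso
      have hib : (i : ℕ) ≤ (r-1)/2 := by have := i.2; omega
      have hjb : (j : ℕ) ≤ (r-2)/2 := by have := j.2; omega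
      obtain ⟨x, hxw, hxadj, hxinj⟩ := nr_to_fun hw1.1
        (fun a c hc hl => by have := hlow _ ⟨a, c, hc, hl⟩; omega)
      obtain ⟨y, hyw, hyadj, hyinj⟩ := nr_to_fun hw2.1
        (fun a c hc hl => by have := hlow _ ⟨a, c, hc, hl⟩; omega)
      have hne' : ¬ (2*(i:ℕ) = 2*(j:ℕ)+1+1 ∧
          ∀ s ≤ 2*(i:ℕ), x (1+s) = y s) := by
        rintro ⟨hmk, hall⟩
        have h1 := hall 1 (by omega)
        rw [hxw (1+1) (by omega), hyw 1 (by omega)] at h1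
        rw [fin_mk_one', hw2.2.2] at h1
        have h2 := hw1.1.2 0 (by omega)
        rw [fin_mk_zero', hw1.2.1] at h2
        exact h2 (by rw [h1])
      obtain ⟨c, cw, hcw, hlen⟩ := exists_cycle_of_two_paths G (2*(i:ℕ)) (2*(j:ℕ)+1+1)
        (fun s => x (1+s)) y
        (fun jj hjj => hxadj (1+jj) (by omega))
        hyadj
        (fun a ha b hb hab => by have := hxinj (1+a) (by omega) (1+b) (by omega) hab; omega)
        hyinj
        (by
          show x 1 = y 0
          rw [hxw 1 (by omega), hyw 0 (by omega), fin_mk_one', fin_mk_zero',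
            hw1.2.2, hw2.2.1])
        (by
          show x (1+2*(i:ℕ)) = y (2*(j:ℕ)+1+1)
          rw [hxw _ (by omega), hyw _ (by omega)]
          calc w1 ⟨1+2*(i:ℕ), by omega⟩ = w1 ⟨2*(i:ℕ)+1, by omega⟩ :=
                fin_congr w1 _ _ _ _ (by omega)
            _ = w2 ⟨2*(j:ℕ)+2, by omega⟩ := hF
            _ = w2 ⟨2*(j:ℕ)+1+1, by omega⟩ := fin_congr w2 _ _ _ _ (by omega))
        hne'
      have := hlow _ ⟨c, cw, hcw, hlen⟩
      omega
    · -- case B B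
      have hib : (i : ℕ) ≤ (r-1)/2 := by have := i.2; omega
      have hjb : (j : ℕ) ≤ (r-1)/2 := by have := j.2; omega
      obtain ⟨x, hxw, hxadj, hxinj⟩ := nr_to_fun hw1.1
        (fun a c hc hl => by have := hlow _ ⟨a, c, hc, hl⟩; omega)
      obtain ⟨y, hyw, hyadj, hyinj⟩ := nr_to_fun hw2.1
        (fun a c hc hl => by have := hlow _ ⟨a, c, hc, hl⟩; omega)
      by_contra hne
      have hne' : ¬ (2*(i:ℕ) = 2*(j:ℕ) ∧
          ∀ s ≤ 2*(i:ℕ), x (1+s) = y (1+s)) := by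
        rintro ⟨hmk, hall⟩
        apply hne
        have hij : (i : ℕ) = (j : ℕ) := by omega
        have hij' : i = j := Fin.ext hij
        subst hij'
        have hw12 : w1 = w2 := by
          funext s
          rcases s with ⟨sv, hs⟩
          rcases Nat.eq_zero_or_pos sv with h0' | h0'
          · subst h0'
            rw [fin_mk_zero', hw1.2.1, hw2.2.1]
          · have h1 := hall (sv-1) (by omega)
            rw [hxw _ (by omega), hyw _ (by omega)] at h1
            calc w1 ⟨sv, hs⟩ = w1 ⟨1+(sv-1), by omega⟩ := fin_congr w1 _ _ _ _ (by omega)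
              _ = w2 ⟨1+(sv-1), by omega⟩ := h1
              _ = w2 ⟨sv, hs⟩ := fin_congr w2 _ _ _ _ (by omega)
        subst hw12
        rfl
      obtain ⟨c, cw, hcw, hlen⟩ := exists_cycle_of_two_paths G (2*(i:ℕ)) (2*(j:ℕ))
        (fun s => x (1+s)) (fun s => y (1+s))
        (fun jj hjj => hxadj (1+jj) (by omega))
        (fun jj hjj => hyadj (1+jj) (by omega))
        (fun a ha b hb hab => by have := hxinj (1+a) (by omega) (1+b) (by omega) hab; omega)
        (fun a ha b hb hab => by have := hyinj (1+a) (by omega) (1+b) (by omega) hab; omega)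
        (by
          show x 1 = y 1
          rw [hxw 1 (by omega), hyw 1 (by omega), fin_mk_one', fin_mk_one',
            hw1.2.2, hw2.2.2])
        (by
          show x (1+2*(i:ℕ)) = y (1+2*(j:ℕ))
          rw [hxw _ (by omega), hyw _ (by omega)]
          calc w1 ⟨1+2*(i:ℕ), by omega⟩ = w1 ⟨2*(i:ℕ)+1, by omega⟩ :=
                fin_congr w1 _ _ _ _ (by omega)
            _ = w2 ⟨2*(j:ℕ)+1, by omega⟩ := hF
            _ = w2 ⟨1+2*(j:ℕ), by omega⟩ := fin_congr w2 _ _ _ _ (by omega))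
        hne'
      have := hlow _ ⟨c, cw, hcw, hlen⟩
      omega
  -- counting
  have hcount := Nat.card_le_card_of_injective _ hinj
  rw [Nat.card_sum, nat_card_sigma, nat_card_sigma] at hcount
  rw [ge_iff_le, ← Fin.sum_univ_eq_sum_range (fun i => nE G (2*i+1) u v) A,
    ← Fin.sum_univ_eq_sum_range (fun i => nE G (2*i) v u) B]
  calc (∑ i : Fin A, nE G (2*(i:ℕ)+1) u v) + ∑ i : Fin B, nE G (2*(i:ℕ)) v u
      = (∑ i : Fin A, Nat.card {w : Fin (2*(i:ℕ)+1+2) → V //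
            IsNR G (2*(i:ℕ)+1+1) w ∧ w 0 = u ∧ w 1 = v}) +
        ∑ i : Fin B, Nat.card {w : Fin (2*(i:ℕ)+2) → V //
            IsNR G (2*(i:ℕ)+1) w ∧ w 0 = v ∧ w 1 = u} := by
        exact congrArg₂ (· + ·)
          (Finset.sum_congr rfl (fun i _ => rfl)) (Finset.sum_congr rfl (fun i _ => rfl))
    _ ≤ Nat.card {a : V // a ∈ L} := hcount
    _ = L.card := Nat.card_eq_finsetCard L
end
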